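/- arXiv:2307.08039 — 4 statements merged into one kernel-verified Lean document; each statement's English description precedes it below -/
import Mathlib

section
/- Let G be a 2-connected graph and let Q be an ear of G in G ∪ Q (a nontrivial path whose endpoints lie in G but whose internal vertices do not). Then G ∪ Q is 2-connected. -/
open SimpleGraph

variable {V : Type}

/-- `C` is a cycle subgraph of `H`. -/
def IsCycleSub (H : SimpleGraph V) (C : H.Subgraph) : Prop :=
  ∃ (v : V) (w : H.Walk v v), w.IsCycle ∧ w.toSubgraph = C

/-- The set of cycle subgraphs of `H` containing the edge `e`. -/
def CyclesThrough (H : SimpleGraph V) (e : Sym2 V) : Set H.Subgraph :=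
  {C | IsCycleSub H C ∧ e ∈ C.edgeSet}

/-- A `k`-cactus: a connected graph in which each edge lies in at most `k` cycles. -/
def IsKCactus (H : SimpleGraph V) (k : ℕ) : Prop :=
  H.Connected ∧ ∀ e ∈ H.edgeSet, (CyclesThrough H e).ncard ≤ k

/-- A graph is 2-connected: at least 3 vertices, connected, and no cut-vertex. -/
def TwoConnected [Fintype V] (H : SimpleGraph V) : Prop :=
  3 ≤ Fintype.card V ∧ H.Connected ∧
    ∀ v : V, ((⊤ : H.Subgraph).deleteVerts {v}).coe.Connected

/-- A subgraph is 2-connected. -/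
def SubTwoConn {H : SimpleGraph V} (B : H.Subgraph) : Prop :=
  3 ≤ B.verts.ncard ∧ B.Connected ∧ ∀ v : V, (B.deleteVerts {v}).coe.Connected

/-- `Q` is an ear of `F` with end-vertices `a` and `b`: a nontrivial path whose
end-vertices lie in `F` but whose internal vertices (and edges) do not. -/
def IsEarWith {H : SimpleGraph V} (F Q : H.Subgraph) (a b : V) : Prop :=
  a ∈ F.verts ∧ b ∈ F.verts ∧
    ∃ p : H.Walk a b, p.IsPath ∧ 1 ≤ p.length ∧ p.toSubgraph = Q ∧
      (∀ w ∈ p.support, w ≠ a → w ≠ b → w ∉ F.verts) ∧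
      ∀ e ∈ p.edges, e ∉ F.edgeSet

/-- `Q` is an ear of `F`. -/
def IsEar {H : SimpleGraph V} (F Q : H.Subgraph) : Prop :=
  ∃ a b, IsEarWith F Q a b

/-- `A` is a `k`-theta subgraph with branch vertices `u` and `v`:
the union of `k` internally disjoint paths from `u` to `v`, at most one of length 1. -/
def IsThetaSubUV {H : SimpleGraph V} (A : H.Subgraph) (k : ℕ) (u v : V) : Prop :=
  u ≠ v ∧ ∃ p : Fin k → H.Walk u v,
    (∀ i, (p i).IsPath) ∧ (∀ i, 1 ≤ (p i).length) ∧
    (∀ i j, i ≠ j → ∀ w ∈ (p i).support, w ∈ (p j).support → w = u ∨ w = v) ∧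
    {i | (p i).length = 1}.Subsingleton ∧
    (⨆ i, (p i).toSubgraph) = A

/-- `A` is a `k`-theta subgraph. -/
def IsThetaSub {H : SimpleGraph V} (A : H.Subgraph) (k : ℕ) : Prop :=
  ∃ u v, IsThetaSubUV A k u v

/-- `G` is (as a whole graph) a `k`-theta graph. -/
def IsThetaGraph (G : SimpleGraph V) (k : ℕ) : Prop :=
  IsThetaSub (⊤ : G.Subgraph) k

/-- `B` is a `θ₃'`-subgraph: a theta graph together with an ear whose
end-vertices avoid the two branch (degree-3) vertices. -/
def IsThetaPrimeSub {H : SimpleGraph V} (B : H.Subgraph) : Prop :=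
  ∃ (A Q : H.Subgraph) (u v a b : V), IsThetaSubUV A 3 u v ∧ IsEarWith A Q a b ∧
    a ≠ u ∧ a ≠ v ∧ b ≠ u ∧ b ≠ v ∧ A ⊔ Q = B

/-- `G` is (as a whole graph) a `θ₃'`-graph. -/
def IsThetaPrimeGraph (G : SimpleGraph V) : Prop :=
  IsThetaPrimeSub (⊤ : G.Subgraph)

/-- The subgraph `B` has no cut-vertex. -/
def NoCutVtx {H : SimpleGraph V} (B : H.Subgraph) : Prop :=
  ∀ v : V, (B.deleteVerts {v}).coe.Preconnected

/-- `B` is a block of `H`: a maximal connected subgraph without a cut-vertex. -/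
def IsBlock (H : SimpleGraph V) (B : H.Subgraph) : Prop :=
  B.Connected ∧ NoCutVtx B ∧
    ∀ C : H.Subgraph, B ≤ C → C.Connected → NoCutVtx C → C = B

/-- `B` is a single-edge subgraph. -/
def IsSingleEdgeSub {H : SimpleGraph V} (B : H.Subgraph) : Prop :=
  ∃ (a b : V) (h : H.Adj a b), B = H.subgraphOfAdj h

/-- The set of cycle subgraphs of `H` lying inside `A` and containing the edge `e`. -/
def CyclesThroughIn (H : SimpleGraph V) (A : H.Subgraph) (e : Sym2 V) : Set H.Subgraph :=
  {C | IsCycleSub H C ∧ C ≤ A ∧ e ∈ C.edgeSet}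

/-- `[Q 0, Q 1, …, Q l]` is an ear decomposition of `H`. -/
def IsEarDecomp (H : SimpleGraph V) (l : ℕ) (Q : Fin (l + 1) → H.Subgraph) : Prop :=
  IsCycleSub H (Q 0) ∧
  (∀ i : Fin (l + 1), 0 < (i : ℕ) →
    IsEar (⨆ j : Fin (l + 1), ⨆ _ : j < i, Q j) (Q i)) ∧
  (∀ i j, i ≠ j → Disjoint (Q i).edgeSet (Q j).edgeSet) ∧
  (⨆ i, Q i) = ⊤


lemma myDeleteVerts_sup {H : SimpleGraph V} (A Q : H.Subgraph) (s : Set V) :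
    (A ⊔ Q).deleteVerts s = A.deleteVerts s ⊔ Q.deleteVerts s := by
  ext x y
  · simp [Subgraph.deleteVerts_verts, Set.union_diff_distrib]
  · simp only [Subgraph.deleteVerts_adj, Subgraph.sup_adj, Subgraph.verts_sup, Set.mem_union]
    constructor
    · rintro ⟨hx, hxs, hy, hys, h | h⟩
      · exact Or.inl ⟨A.edge_vert h, hxs, A.edge_vert h.symm, hys, h⟩
      · exact Or.inr ⟨Q.edge_vert h, hxs, Q.edge_vert h.symm, hys, h⟩
    · rintro (⟨hx, hxs, hy, hys, h⟩ | ⟨hx, hxs, hy, hys, h⟩)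
      · exact ⟨Or.inl hx, hxs, Or.inl hy, hys, Or.inl h⟩
      · exact ⟨Or.inr hx, hxs, Or.inr hy, hys, Or.inr h⟩

lemma myDeleteVerts_eq_self {H : SimpleGraph V} {G' : H.Subgraph} {v : V}
    (hv : v ∉ G'.verts) : G'.deleteVerts {v} = G' := by
  ext x y
  · simp only [Subgraph.deleteVerts_verts, Set.mem_diff, Set.mem_singleton_iff,
      and_iff_left_iff_imp]
    rintro hx rfl; exact hv hx
  · simp only [Subgraph.deleteVerts_adj, Set.mem_singleton_iff]
    constructor
    · rintro ⟨_, _, _, _, h⟩; exact h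
    · intro h
      exact ⟨G'.edge_vert h, fun h' => hv (h' ▸ G'.edge_vert h),
        G'.edge_vert h.symm, fun h' => hv (h' ▸ G'.edge_vert h.symm), h⟩

lemma myLe_deleteVerts {H : SimpleGraph V} {S T : H.Subgraph} {v : V}
    (hST : S ≤ T) (hv : v ∉ S.verts) : S ≤ T.deleteVerts {v} := by
  constructor
  · intro x hx
    exact ⟨hST.1 hx, fun h => hv (Set.mem_singleton_iff.1 h ▸ hx)⟩
  · intro x y h
    rw [Subgraph.deleteVerts_adj]
    exact ⟨hST.1 (S.edge_vert h), fun h' => hv (Set.mem_singleton_iff.1 h' ▸ S.edge_vert h),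
      hST.1 (S.edge_vert h.symm),
      fun h' => hv (Set.mem_singleton_iff.1 h' ▸ S.edge_vert h.symm), hST.2 h⟩

/-- Deleting an endpoint of the ear keeps connectivity. -/
lemma delete_end_connected {H : SimpleGraph V} (A : H.Subgraph) {a b : V}
    (hAdel : (A.deleteVerts {a}).Connected) (hab : a ≠ b) (hbA : b ∈ A.verts) (p : H.Walk a b) (hp : p.IsPath) :
    ((A ⊔ p.toSubgraph).deleteVerts {a}).Connected := by
  obtain ⟨c, hadj, p', rfl⟩ := Walk.exists_eq_cons_of_ne hab p
  rw [Walk.cons_isPath_iff] at hp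
  rw [myDeleteVerts_sup]
  have hsub : p'.toSubgraph ≤ (Walk.cons hadj p').toSubgraph := le_sup_right
  have hK : (A.deleteVerts {a} ⊔ p'.toSubgraph).Connected := by
    refine Subgraph.connected_sup hAdel.preconnected p'.toSubgraph_connected.preconnected ⟨b, ?_, p'.end_mem_verts_toSubgraph⟩
    exact ⟨hbA, fun h => hab (Set.mem_singleton_iff.1 h).symm⟩
  refine hK.mono (sup_le_sup_left ?_ _) ?_
  · exact myLe_deleteVerts hsub (by
      rw [Walk.mem_verts_toSubgraph]; exact hp.2)
  · simp only [Subgraph.verts_sup, Subgraph.deleteVerts_verts]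
    congr 1
    ext x
    simp only [Walk.mem_verts_toSubgraph, Walk.support_cons, List.mem_cons, Set.mem_diff,
      Set.mem_setOf_eq, Set.mem_singleton_iff]
    constructor
    · intro hx; exact ⟨Or.inr hx, fun h => hp.2 (h ▸ hx)⟩
    · rintro ⟨h | h, hne⟩
      · exact absurd h hne
      · exact h

/-- Adding an ear to a 2-connected graph yields a 2-connected graph. -/
theorem ear_union_twoConnected (H : SimpleGraph V) (A Q : H.Subgraph)
    (hA : SubTwoConn A) (hQ : IsEar A Q) :
    SubTwoConn (A ⊔ Q) := by
  classical
  obtain ⟨a, b, haA, hbA, p, hp, hlen, hpQ, hint, -⟩ := hQ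
  subst hpQ
  have hab : a ≠ b := by
    rintro rfl
    rw [Walk.isPath_iff_eq_nil] at hp
    subst hp
    simp at hlen
  have hAfin : A.verts.Finite := by
    by_contra h
    have h3 := hA.1
    rw [Set.Infinite.ncard h] at h3
    omega
  have hQfin : p.toSubgraph.verts.Finite := by
    rw [Walk.verts_toSubgraph]
    exact p.support.finite_toSet
  have haQ : a ∈ p.toSubgraph.verts := p.start_mem_verts_toSubgraph
  have hbQ : b ∈ p.toSubgraph.verts := p.end_mem_verts_toSubgraph
  refine ⟨?_, ?_, ?_⟩
  · calc (3 : ℕ) ≤ A.verts.ncard := hA.1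
      _ ≤ (A ⊔ p.toSubgraph).verts.ncard := by
          refine Set.ncard_le_ncard ?_ ?_
          · exact Set.subset_union_left
          · exact hAfin.union hQfin
  · exact Subgraph.connected_sup hA.2.1.preconnected p.toSubgraph_connected.preconnected ⟨a, haA, haQ⟩
  · intro v
    refine Subgraph.connected_iff'.mp ?_
    by_cases hvs : v ∈ p.support
    · by_cases hva : v = a
      · subst hva
        exact delete_end_connected A ⟨hA.2.2 v⟩ hab hbA p hp
      · by_cases hvb : v = b
        · subst hvb
          have := delete_end_connected A ⟨hA.2.2 v⟩ hab.symm haA p.reverse hp.reverse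
          rwa [Walk.toSubgraph_reverse] at this
        · -- v is an internal vertex, so v ∉ A.verts
          have hvA : v ∉ A.verts := hint v hvs hva hvb
          set q := p.takeUntil v hvs with hq_def
          set r := p.dropUntil v hvs with hr_def
          have hspec : q.append r = p := p.take_spec hvs
          have hq : q.IsPath := hp.takeUntil hvs
          have hr : r.IsPath := hp.dropUntil hvs
          obtain ⟨u, hadj0, t0, hqr⟩ := Walk.exists_eq_cons_of_ne hva q.reverse
          obtain ⟨w, hadj1, t1, hrr⟩ := Walk.exists_eq_cons_of_ne hvb r
          have hqrev : q.reverse.IsPath := hq.reverse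
          rw [hqr, Walk.cons_isPath_iff] at hqrev
          rw [hrr, Walk.cons_isPath_iff] at hr
          have ht0le : t0.toSubgraph ≤ p.toSubgraph := by
            calc t0.toSubgraph ≤ q.reverse.toSubgraph := by rw [hqr]; exact le_sup_right
              _ = q.toSubgraph := q.toSubgraph_reverse
              _ ≤ p.toSubgraph := by
                  rw [← hspec, Walk.toSubgraph_append]; exact le_sup_left
          have ht1le : t1.toSubgraph ≤ p.toSubgraph := by
            calc t1.toSubgraph ≤ r.toSubgraph := by rw [hrr]; exact le_sup_right
              _ ≤ p.toSubgraph := by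
                  rw [← hspec, Walk.toSubgraph_append]; exact le_sup_right
          have hK : ((A ⊔ t0.toSubgraph) ⊔ t1.toSubgraph).Connected := by
            refine Subgraph.connected_sup (Subgraph.connected_sup hA.2.1.preconnected t0.toSubgraph_connected.preconnected
              ⟨a, haA, t0.end_mem_verts_toSubgraph⟩).preconnected t1.toSubgraph_connected.preconnected
              ⟨b, Or.inl hbA, t1.end_mem_verts_toSubgraph⟩
          rw [myDeleteVerts_sup]
          refine hK.mono ?_ ?_
          · refine sup_le (sup_le ?_ ?_) ?_
            · exact le_trans (le_of_eq (myDeleteVerts_eq_self hvA).symm) le_sup_left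
            · exact le_trans (myLe_deleteVerts ht0le (by
                rw [Walk.mem_verts_toSubgraph]; exact hqrev.2)) le_sup_right
            · exact le_trans (myLe_deleteVerts ht1le (by
                rw [Walk.mem_verts_toSubgraph]; exact hr.2)) le_sup_right
          · simp only [Subgraph.verts_sup, Subgraph.deleteVerts_verts,
              Walk.verts_toSubgraph]
            ext x
            have hmemq : x ∈ q.support ↔ x = v ∨ x ∈ t0.support := by
              rw [← List.mem_reverse, ← Walk.support_reverse, hqr, Walk.support_cons,
                List.mem_cons]
            have hmemr : x ∈ r.support ↔ x = v ∨ x ∈ t1.support := by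
              rw [hrr, Walk.support_cons, List.mem_cons]
            have hmemp : x ∈ p.support ↔ x ∈ q.support ∨ x ∈ r.support := by
              rw [← hspec]
              exact Walk.mem_support_append_iff q r
            simp only [Set.mem_union, Set.mem_diff, Set.mem_setOf_eq, Set.mem_singleton_iff]
            constructor
            · rintro ((hx | hx) | hx)
              · refine Or.inl ⟨hx, ?_⟩
                rintro rfl; exact hvA hx
              · refine Or.inr ⟨?_, ?_⟩
                · rw [hmemp, hmemq]; exact Or.inl (Or.inr hx)
                · rintro rfl; exact hqrev.2 hx
              · refine Or.inr ⟨?_, ?_⟩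
                · rw [hmemp, hmemr]; exact Or.inr (Or.inr hx)
                · rintro rfl; exact hr.2 hx
            · rintro (⟨hx, -⟩ | ⟨hx, hxv⟩)
              · exact Or.inl (Or.inl hx)
              · rw [hmemp, hmemq, hmemr] at hx
                rcases hx with (h | h) | (h | h)
                · exact absurd h hxv
                · exact Or.inl (Or.inr h)
                · exact absurd h hxv
                · exact Or.inr h
    · -- v not on the path at all
      have hva : v ≠ a := fun h => hvs (h ▸ p.start_mem_support)
      rw [myDeleteVerts_sup, myDeleteVerts_eq_self (G' := p.toSubgraph) (by
        rw [Walk.mem_verts_toSubgraph]; exact hvs)]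
      refine Subgraph.connected_sup (⟨hA.2.2 v⟩ : (A.deleteVerts {v}).Connected).preconnected p.toSubgraph_connected.preconnected
        ⟨a, ⟨haA, fun h => hva (Set.mem_singleton_iff.1 h).symm⟩, haQ⟩
end

section
/- Let G be a 2-connected graph, let uv be an edge of G contained in exactly k cycles of G, and let Q be an ear of G in G ∪ Q. Then uv is contained in at least k+1 cycles in G ∪ Q. -/
open SimpleGraph

variable {V : Type}

section EarAuxSection

variable {H : SimpleGraph V}

namespace EarAux

variable {H : SimpleGraph V}

/-- The walk stays inside the subgraph `B`. -/
def Inside (B : H.Subgraph) {x y : V} (w : H.Walk x y) : Prop :=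
  (∀ v ∈ w.support, v ∈ B.verts) ∧ (∀ e ∈ w.edges, e ∈ B.edgeSet)

lemma Inside.mono {B : H.Subgraph} {x y x' y' : V} {w : H.Walk x y} {w' : H.Walk x' y'}
    (h : Inside B w) (hs : w'.support ⊆ w.support) (he : w'.edges ⊆ w.edges) :
    Inside B w' :=
  ⟨fun v hv => h.1 v (hs hv), fun e hE => h.2 e (he hE)⟩

lemma toSubgraph_le {B : H.Subgraph} {x y : V} {w : H.Walk x y} (h : Inside B w) :
    w.toSubgraph ≤ B := by
  induction w with
  | nil =>
    rw [Walk.toSubgraph, singletonSubgraph_le_iff]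
    exact h.1 _ (by simp)
  | @cons a c d hadj p ih =>
    rw [Walk.toSubgraph]
    have hBadj : B.Adj a c := by
      rw [← Subgraph.mem_edgeSet]
      exact h.2 _ (by simp)
    refine sup_le ?_ (ih (h.mono ?_ ?_))
    · exact SimpleGraph.subgraphOfAdj_le_of_adj B hBadj
    · rw [Walk.support_cons]; exact List.subset_cons_self _ _
    · rw [Walk.edges_cons]; exact List.subset_cons_self _ _

lemma exists_path_in (B : H.Subgraph) (hB : B.coe.Connected) {y z : V} (hy : y ∈ B.verts)
    (hz : z ∈ B.verts) : ∃ w : H.Walk y z, w.IsPath ∧ Inside B w := by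
  classical
  obtain ⟨w0⟩ := hB ⟨y, hy⟩ ⟨z, hz⟩
  have hin : ∀ {c d : B.verts} (w : B.coe.Walk c d), Inside B (w.map B.hom) := by
    intro c d w
    induction w with
    | nil => exact ⟨by simp [Subtype.coe_prop], by simp⟩
    | @cons a c' d' hadj p ih =>
      constructor
      · intro v hv
        simp only [Walk.map_cons, Walk.support_cons, List.mem_cons] at hv
        rcases hv with rfl | hv
        · exact a.coe_prop
        · exact ih.1 v hv
      · intro e he
        simp only [Walk.map_cons, Walk.edges_cons, List.mem_cons] at he
        rcases he with rfl | he
        · exact hadj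
        · exact ih.2 e he
  exact ⟨(w0.map B.hom).bypass, Walk.bypass_isPath _,
    (hin w0).mono (Walk.support_bypass_subset _) (Walk.edges_bypass_subset _)⟩

lemma exists_firstHit {S : Set V} :
    ∀ {m t : V} (P : H.Walk m t), t ∈ S →
    ∃ (x : V) (P' : H.Walk m x), x ∈ S ∧ (∀ y ∈ P'.support, y ∈ S → y = x) ∧
      P'.support ⊆ P.support ∧ P'.edges ⊆ P.edges := by
  intro m t P ht
  induction P with
  | @nil m =>
    exact ⟨m, .nil, ht, by simp, by simp, by simp⟩
  | @cons a c d hadj p ih =>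
    by_cases hm : a ∈ S
    · refine ⟨a, .nil, hm, by simp, by simp, by simp⟩
    · obtain ⟨x, P', hx, honly, hsup, hedg⟩ := ih ht
      refine ⟨x, .cons hadj P', hx, ?_, ?_, ?_⟩
      · intro y hy hyS
        simp only [Walk.support_cons, List.mem_cons] at hy
        rcases hy with rfl | hy
        · exact absurd hyS hm
        · exact honly y hy hyS
      · rw [Walk.support_cons, Walk.support_cons]
        exact List.cons_subset_cons _ hsup
      · rw [Walk.edges_cons, Walk.edges_cons]
        exact List.cons_subset_cons _ hedg

lemma end_mem_tail {c x : V} (w : H.Walk x c) (hw : ¬ w.Nil) : c ∈ w.support.tail := by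
  cases w with
  | nil => exact absurd Walk.nil_nil hw
  | cons h p => simp [p.end_mem_support]

lemma mem_support_iff_mem_tail {c : V} (w : H.Walk c c) (hw : ¬ w.Nil) (y : V) :
    y ∈ w.support ↔ y ∈ w.support.tail := by
  have hc : c ∈ w.support.tail := end_mem_tail w hw
  conv_lhs => rw [w.support_eq_cons]
  rw [List.mem_cons]
  exact ⟨fun h => h.elim (fun h => h ▸ hc) id, Or.inr⟩

lemma mem_support_rotate [DecidableEq V] {c m : V} {w : H.Walk c c} (hw : w.IsCycle)
    (hm : m ∈ w.support) (y : V) : y ∈ (w.rotate m hm).support ↔ y ∈ w.support := by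
  have h1 : ¬ w.Nil := hw.not_nil
  have h2 : ¬ (w.rotate m hm).Nil := (hw.rotate hm).not_nil
  rw [mem_support_iff_mem_tail _ h1, mem_support_iff_mem_tail _ h2]
  exact (w.support_rotate m hm).perm.mem_iff


lemma cycle_split [DecidableEq V] {c x : V} {w : H.Walk c c} (hw : w.IsCycle)
    (hx : x ∈ w.support) (hxc : x ≠ c) :
    (w.takeUntil x hx).IsPath ∧ (w.dropUntil x hx).IsPath ∧
    (∀ y ∈ (w.takeUntil x hx).support, y ∈ (w.dropUntil x hx).support → y = c ∨ y = x) ∧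
    (∀ e, e ∈ w.edges ↔ e ∈ (w.takeUntil x hx).edges ∨ e ∈ (w.dropUntil x hx).edges) := by
  set D1 := w.takeUntil x hx with hD1
  set D2 := w.dropUntil x hx with hD2
  have hspec : D1.append D2 = w := w.take_spec hx
  have hsup : w.support = D1.support ++ D2.support.tail := by
    rw [← hspec, Walk.support_append]
  have htail : w.support.tail = D1.support.tail ++ D2.support.tail := by
    rw [← hspec, Walk.tail_support_append]
  have hnodup : (D1.support.tail ++ D2.support.tail).Nodup := htail ▸ hw.support_nodup
  obtain ⟨hnd1, hnd2, hdisj⟩ := List.nodup_append.mp hnodup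
  have hD2nil : ¬ D2.Nil := Walk.not_nil_of_ne hxc
  have hcn : c ∈ D2.support.tail := end_mem_tail D2 hD2nil
  have hxt : x ∈ D1.support.tail := by
    have := D1.end_mem_support
    rw [D1.support_eq_cons, List.mem_cons] at this
    exact this.resolve_left hxc
  have hcnot1 : c ∉ D1.support.tail := fun h => hdisj c h c hcn rfl
  have hxnot2 : x ∉ D2.support.tail := fun h => hdisj x hxt x h rfl
  have hp1 : D1.IsPath := by
    apply Walk.IsPath.mk'
    rw [D1.support_eq_cons]
    exact List.nodup_cons.mpr ⟨hcnot1, hnd1⟩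
  have hp2 : D2.IsPath := by
    apply Walk.IsPath.mk'
    rw [D2.support_eq_cons]
    exact List.nodup_cons.mpr ⟨hxnot2, hnd2⟩
  refine ⟨hp1, hp2, ?_, ?_⟩
  · intro y hy1 hy2
    rw [D1.support_eq_cons, List.mem_cons] at hy1
    rw [D2.support_eq_cons, List.mem_cons] at hy2
    rcases hy1 with rfl | hy1
    · exact Or.inl rfl
    rcases hy2 with rfl | hy2
    · exact Or.inr rfl
    · exact absurd hy2 (fun h => hdisj _ hy1 _ h rfl)
  · intro e
    rw [← hspec, Walk.edges_append, List.mem_append]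

lemma mk_cycle {s t : V} {P1 : H.Walk s t} {ρ : H.Walk t s} (h1 : P1.IsPath) (h2 : ρ.IsPath)
    (hst : s ≠ t)
    (hdisj : ∀ y ∈ P1.support, y ∈ ρ.support → y = s ∨ y = t)
    (hP : ¬(s(s, t) ∈ P1.edges ∧ s(s, t) ∈ ρ.edges)) :
    (P1.append ρ).IsCycle := by
  have hs1 : s ∉ P1.support.tail := by
    have := h1.support_nodup
    rw [P1.support_eq_cons, List.nodup_cons] at this
    exact this.1
  have ht2 : t ∉ ρ.support.tail := by
    have := h2.support_nodup
    rw [ρ.support_eq_cons, List.nodup_cons] at this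
    exact this.1
  have hedisj : ∀ e ∈ P1.edges, e ∉ ρ.edges := by
    intro e he1 he2
    induction e with
    | _ cc dd =>
      have hcc1 : cc ∈ P1.support := P1.fst_mem_support_of_mem_edges he1
      have hdd1 : dd ∈ P1.support := P1.snd_mem_support_of_mem_edges he1
      have hcc2 : cc ∈ ρ.support := ρ.fst_mem_support_of_mem_edges he2
      have hdd2 : dd ∈ ρ.support := ρ.snd_mem_support_of_mem_edges he2
      have hne : cc ≠ dd := (P1.edges_subset_edgeSet he1).ne
      rcases hdisj cc hcc1 hcc2 with rfl | rfl <;>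
        rcases hdisj dd hdd1 hdd2 with rfl | rfl
      · exact hne rfl
      · exact hP ⟨he1, he2⟩
      · exact hP (by rw [Sym2.eq_swap]; exact ⟨he1, he2⟩)
      · exact hne rfl
  refine ⟨⟨⟨?_⟩, ?_⟩, ?_⟩
  · rw [Walk.edges_append]
    exact List.Nodup.append h1.edges_nodup h2.edges_nodup hedisj
  · intro hnil
    have : t ∈ (P1.append ρ).support := by
      rw [Walk.mem_support_append_iff]
      exact Or.inl P1.end_mem_support
    rw [hnil] at this
    simp at this
    exact hst this.symm
  · rw [Walk.tail_support_append]
    refine List.Nodup.append ?_ ?_ ?_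
    · have := h1.support_nodup
      rw [P1.support_eq_cons, List.nodup_cons] at this
      exact this.2
    · have := h2.support_nodup
      rw [ρ.support_eq_cons, List.nodup_cons] at this
      exact this.2
    · intro y hy1 hy2
      have hy1' : y ∈ P1.support := by
        rw [P1.support_eq_cons, List.mem_cons]; exact Or.inr hy1
      have hy2' : y ∈ ρ.support := by
        rw [ρ.support_eq_cons, List.mem_cons]; exact Or.inr hy2
      rcases hdisj y hy1' hy2' with rfl | rfl
      · exact hs1 hy1
      · exact ht2 hy2

lemma exists_third {A : H.Subgraph} (hcard : 3 ≤ A.verts.ncard) (u v : V) :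
    ∃ z ∈ A.verts, z ≠ u ∧ z ≠ v := by
  by_contra hcon
  push_neg at hcon
  have hsub : A.verts ⊆ {u, v} := by
    intro z hz
    rcases eq_or_ne z u with rfl | hzu
    · exact Set.mem_insert _ _
    · exact Set.mem_insert_iff.mpr (Or.inr (hcon z hz hzu))
  have : A.verts.ncard ≤ 2 := by
    refine le_trans (Set.ncard_le_ncard hsub ((Set.finite_singleton v).insert u)) ?_
    refine le_trans (Set.ncard_insert_le _ _) ?_
    simp [Set.ncard_singleton]
  omega

lemma cycle_through_edge (A : H.Subgraph)
    (hdel : ∀ x : V, (A.deleteVerts {x}).coe.Connected)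
    (hcard : 3 ≤ A.verts.ncard) {u v : V} (huv : s(u, v) ∈ A.edgeSet) :
    ∃ w : H.Walk u u, w.IsCycle ∧ Inside A w ∧ s(u, v) ∈ w.edges := by
  classical
  have hAadj : A.Adj u v := huv
  have hadj : H.Adj u v := A.adj_sub hAadj
  have hne : u ≠ v := hadj.ne
  have hu : u ∈ A.verts := A.edge_vert hAadj
  have hv : v ∈ A.verts := A.edge_vert hAadj.symm
  obtain ⟨z, hzA, hzu, hzv⟩ := exists_third hcard u v
  -- a neighbor w₀ ≠ v of u
  have huB : u ∈ (A.deleteVerts {v}).verts := by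
    rw [Subgraph.deleteVerts_verts]; exact ⟨hu, by simp [hne]⟩
  have hzB : z ∈ (A.deleteVerts {v}).verts := by
    rw [Subgraph.deleteVerts_verts]; exact ⟨hzA, by simp [hzv]⟩
  obtain ⟨pz, hpz_path, hpz_in⟩ := exists_path_in _ (hdel v) huB hzB
  have hBle : (A.deleteVerts {v} : H.Subgraph) ≤ A := Subgraph.deleteVerts_le
  cases pz with
  | nil => exact absurd rfl hzu.symm
  | @cons _ w₀ _ h' p₂ =>
    have hw₀B : w₀ ∈ (A.deleteVerts {v}).verts := by
      apply hpz_in.1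
      rw [Walk.support_cons, List.mem_cons]
      exact Or.inr p₂.start_mem_support
    rw [Subgraph.deleteVerts_verts] at hw₀B
    have hw₀v : w₀ ≠ v := by simpa using hw₀B.2
    have hw₀A : w₀ ∈ A.verts := hw₀B.1
    have huw₀ : s(u, w₀) ∈ A.edgeSet := by
      apply Subgraph.edgeSet_mono hBle
      apply hpz_in.2
      rw [Walk.edges_cons, List.mem_cons]
      exact Or.inl rfl
    -- a path from w₀ to v avoiding u
    have hw₀B' : w₀ ∈ (A.deleteVerts {u}).verts := by
      rw [Subgraph.deleteVerts_verts]; exact ⟨hw₀A, by simp [h'.ne']⟩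
    have hvB' : v ∈ (A.deleteVerts {u}).verts := by
      rw [Subgraph.deleteVerts_verts]; exact ⟨hv, by simp [hne.symm]⟩
    obtain ⟨pw, hpw_path, hpw_in⟩ := exists_path_in _ (hdel u) hw₀B' hvB'
    have hB'le : (A.deleteVerts {u} : H.Subgraph) ≤ A := Subgraph.deleteVerts_le
    have hupw : u ∉ pw.support := by
      intro hmem
      have := hpw_in.1 u hmem
      rw [Subgraph.deleteVerts_verts] at this
      simp at this
    have hP1 : (Walk.cons h' pw).IsPath := hpw_path.cons hupw
    have hρ : (Walk.cons hadj.symm Walk.nil : H.Walk v u).IsPath := by simp [hne.symm]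
    have hcyc : ((Walk.cons h' pw).append (Walk.cons hadj.symm Walk.nil)).IsCycle := by
      apply mk_cycle hP1 hρ hne
      · intro y hy1 hy2
        simp only [Walk.support_cons, Walk.support_nil, List.mem_cons,
          List.not_mem_nil, or_false] at hy2
        rcases hy2 with rfl | rfl
        · exact Or.inr rfl
        · exact Or.inl rfl
      · rintro ⟨h1, -⟩
        rw [Walk.edges_cons, List.mem_cons] at h1
        rcases h1 with h1 | h1
        · exact hw₀v.symm (Sym2.congr_right.mp h1.symm).symm
        · exact hupw (pw.fst_mem_support_of_mem_edges h1)
    refine ⟨_, hcyc, ?_, ?_⟩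
    · constructor
      · intro y hy
        rw [Walk.mem_support_append_iff] at hy
        rcases hy with hy | hy
        · rw [Walk.support_cons, List.mem_cons] at hy
          rcases hy with rfl | hy
          · exact hu
          · exact hB'le.1 (hpw_in.1 y hy)
        · simp only [Walk.support_cons, Walk.support_nil, List.mem_cons,
            List.not_mem_nil, or_false] at hy
          rcases hy with rfl | rfl
          · exact hv
          · exact hu
      · intro e he
        rw [Walk.edges_append, List.mem_append] at he
        rcases he with he | he
        · rw [Walk.edges_cons, List.mem_cons] at he
          rcases he with rfl | he
          · exact huw₀
          · exact Subgraph.edgeSet_mono hB'le (hpw_in.2 e he)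
        · simp only [Walk.edges_cons, Walk.edges_nil, List.mem_cons,
            List.not_mem_nil, or_false] at he
          subst he
          rwa [Sym2.eq_swap]
    · rw [Walk.edges_append, List.mem_append, Walk.edges_cons]
      exact Or.inr (by rw [Sym2.eq_swap]; simp)


lemma EV (A : H.Subgraph) (hdel : ∀ x : V, (A.deleteVerts {x}).coe.Connected)
    (hcard : 3 ≤ A.verts.ncard) {u v : V} (huv : s(u, v) ∈ A.edgeSet) :
    ∀ (n : ℕ) (m : V) (q : H.Walk m u), Inside A q → q.length ≤ n →
    ∃ (c : V) (w : H.Walk c c), w.IsCycle ∧ Inside A w ∧ s(u, v) ∈ w.edges ∧ m ∈ w.support := by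
  classical
  intro n
  induction n with
  | zero =>
    intro m q hq hlen
    have hm : m = u := Walk.eq_of_length_eq_zero (Nat.le_zero.mp hlen)
    subst hm
    obtain ⟨w, h1, h2, h3⟩ := cycle_through_edge A hdel hcard huv
    exact ⟨m, w, h1, h2, h3, w.start_mem_support⟩
  | succ n ih =>
    intro m q hq hlen
    rcases eq_or_ne m u with rfl | hmu
    · obtain ⟨w, h1, h2, h3⟩ := cycle_through_edge A hdel hcard huv
      exact ⟨m, w, h1, h2, h3, w.start_mem_support⟩
    cases q with
    | nil => exact absurd rfl hmu
    | @cons _ m₁ _ h q' =>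
      have hq' : Inside A q' := hq.mono
        (by rw [Walk.support_cons]; exact List.subset_cons_self _ _)
        (by rw [Walk.edges_cons]; exact List.subset_cons_self _ _)
      have hlen' : q'.length ≤ n := by
        rw [Walk.length_cons] at hlen; omega
      obtain ⟨c, w₀, hw₀c, hw₀in, hw₀uv, hm₁⟩ := ih m₁ q' hq' hlen'
      by_cases hmw : m ∈ w₀.support
      · exact ⟨c, w₀, hw₀c, hw₀in, hw₀uv, hmw⟩
      set wc := w₀.rotate m₁ hm₁ with hwcdef
      have hwc : wc.IsCycle := hw₀c.rotate hm₁
      have hsupiff : ∀ y, y ∈ wc.support ↔ y ∈ w₀.support :=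
        mem_support_rotate hw₀c hm₁
      have hedgeiff : ∀ e, e ∈ wc.edges ↔ e ∈ w₀.edges :=
        fun e => (w₀.rotate_edges m₁ hm₁).perm.mem_iff
      have hwcin : Inside A wc :=
        ⟨fun y hy => hw₀in.1 y ((hsupiff y).1 hy), fun e he => hw₀in.2 e ((hedgeiff e).1 he)⟩
      have huvwc : s(u, v) ∈ wc.edges := (hedgeiff _).2 hw₀uv
      have hAadj : A.Adj u v := huv
      have hneuv : u ≠ v := (A.adj_sub hAadj).ne
      have hmm₁ : m ≠ m₁ := h.ne
      have hmA : m ∈ A.verts := hq.1 m (by rw [Walk.support_cons]; exact List.mem_cons_self)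
      have hm₁A : m₁ ∈ A.verts := hq.1 m₁
        (by rw [Walk.support_cons, List.mem_cons]; exact Or.inr q'.start_mem_support)
      have husup : u ∈ w₀.support := w₀.fst_mem_support_of_mem_edges hw₀uv
      have hvsup : v ∈ w₀.support := w₀.snd_mem_support_of_mem_edges hw₀uv
      obtain ⟨t, htw, htm₁, htA⟩ : ∃ t, t ∈ wc.support ∧ t ≠ m₁ ∧ t ∈ A.verts := by
        rcases eq_or_ne u m₁ with rfl | hu1
        · exact ⟨v, (hsupiff v).2 hvsup, hneuv.symm, A.edge_vert hAadj.symm⟩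
        · exact ⟨u, (hsupiff u).2 husup, hu1, A.edge_vert hAadj⟩
      have hmB : m ∈ (A.deleteVerts {m₁}).verts := by
        rw [Subgraph.deleteVerts_verts]; exact ⟨hmA, by simp [hmm₁]⟩
      have htB : t ∈ (A.deleteVerts {m₁}).verts := by
        rw [Subgraph.deleteVerts_verts]; exact ⟨htA, by simp [htm₁]⟩
      obtain ⟨P₀, hP₀path, hP₀in⟩ := exists_path_in _ (hdel m₁) hmB htB
      have htS : t ∈ {y : V | y ∈ wc.support} := htw
      obtain ⟨x, P', hxS, honly, hsubs, hsube⟩ := exists_firstHit P₀ htS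
      have hP''path : P'.bypass.IsPath := P'.bypass_isPath
      have hP''s : P'.bypass.support ⊆ P₀.support := fun _ hy => hsubs (P'.support_bypass_subset hy)
      have hP''e : P'.bypass.edges ⊆ P₀.edges := fun _ he => hsube (P'.edges_bypass_subset he)
      have honly'' : ∀ y ∈ P'.bypass.support, y ∈ wc.support → y = x :=
        fun y hy hyS => honly y (P'.support_bypass_subset hy) hyS
      have hxwc : x ∈ wc.support := hxS
      have hxm₁ : x ≠ m₁ := by
        have hx0 : x ∈ (A.deleteVerts {m₁}).verts := hP₀in.1 x (hsubs P'.end_mem_support)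
        rw [Subgraph.deleteVerts_verts] at hx0
        simpa using hx0.2
      have hm₁P'' : m₁ ∉ P'.bypass.support := by
        intro hc
        have := hP₀in.1 m₁ (hP''s hc)
        rw [Subgraph.deleteVerts_verts] at this
        simp at this
      have hxm : x ≠ m := fun hc => hmw ((hsupiff m).1 (hc ▸ hxwc))
      obtain ⟨hD1, hD2, hdisjD, hedgesD⟩ := cycle_split hwc hxwc hxm₁
      have hωpath : (Walk.cons h.symm P'.bypass).IsPath := hP''path.cons hm₁P''
      have hωkey : s(m₁, x) ∉ (Walk.cons h.symm P'.bypass).edges := by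
        rw [Walk.edges_cons, List.mem_cons]
        rintro (h1 | h1)
        · exact hxm (Sym2.congr_right.mp h1)
        · exact hm₁P'' (P'.bypass.fst_mem_support_of_mem_edges h1)
      have hsm₁m : s(m₁, m) ∈ A.edgeSet := by
        rw [Sym2.eq_swap]
        exact hq.2 _ (by rw [Walk.edges_cons]; exact List.mem_cons_self)
      have hωin : Inside A (Walk.cons h.symm P'.bypass) := by
        constructor
        · intro y hy
          rw [Walk.support_cons, List.mem_cons] at hy
          rcases hy with rfl | hy
          · exact hm₁A
          · have := hP₀in.1 y (hP''s hy)
            rw [Subgraph.deleteVerts_verts] at this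
            exact this.1
        · intro e he
          rw [Walk.edges_cons, List.mem_cons] at he
          rcases he with rfl | he
          · exact hsm₁m
          · exact Subgraph.edgeSet_mono Subgraph.deleteVerts_le (hP₀in.2 e (hP''e he))
      have build : ∀ E : H.Walk m₁ x, E.IsPath → (∀ y ∈ E.support, y ∈ wc.support) →
          (∀ e ∈ E.edges, e ∈ wc.edges) → s(u, v) ∈ E.edges →
          ∃ (c : V) (w : H.Walk c c),
            w.IsCycle ∧ Inside A w ∧ s(u, v) ∈ w.edges ∧ m ∈ w.support := by
        intro E hEpath hEs hEe hEuv
        have hcyc : (E.append (Walk.cons h.symm P'.bypass).reverse).IsCycle := by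
          apply mk_cycle hEpath hωpath.reverse hxm₁.symm
          · intro y hy1 hy2
            rw [Walk.support_reverse, List.mem_reverse, Walk.support_cons, List.mem_cons] at hy2
            rcases hy2 with rfl | hy2
            · exact Or.inl rfl
            · exact Or.inr (honly'' y hy2 (hEs y hy1))
          · rintro ⟨-, h2⟩
            rw [Walk.edges_reverse, List.mem_reverse] at h2
            exact hωkey h2
        refine ⟨m₁, E.append (Walk.cons h.symm P'.bypass).reverse, hcyc, ?_, ?_, ?_⟩
        · constructor
          · intro y hy
            rw [Walk.mem_support_append_iff] at hy
            rcases hy with hy | hy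
            · exact hwcin.1 y (hEs y hy)
            · rw [Walk.support_reverse, List.mem_reverse] at hy
              exact hωin.1 y hy
          · intro e he
            rw [Walk.edges_append, List.mem_append] at he
            rcases he with he | he
            · exact hwcin.2 e (hEe e he)
            · rw [Walk.edges_reverse, List.mem_reverse] at he
              exact hωin.2 e he
        · rw [Walk.edges_append, List.mem_append]
          exact Or.inl hEuv
        · rw [Walk.mem_support_append_iff]
          refine Or.inr ?_
          rw [Walk.support_reverse, List.mem_reverse, Walk.support_cons, List.mem_cons]
          exact Or.inr P'.bypass.start_mem_support
      rcases (hedgesD s(u, v)).1 huvwc with hcase | hcase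
      · exact build (wc.takeUntil x hxwc) hD1 (fun y hy => wc.support_takeUntil_subset _ hy)
          (fun e he => wc.edges_takeUntil_subset _ he) hcase
      · refine build (wc.dropUntil x hxwc).reverse hD2.reverse ?_ ?_ ?_
        · intro y hy
          rw [Walk.support_reverse, List.mem_reverse] at hy
          exact wc.support_dropUntil_subset _ hy
        · intro e he
          rw [Walk.edges_reverse, List.mem_reverse] at he
          exact wc.edges_dropUntil_subset _ he
        · rw [Walk.edges_reverse, List.mem_reverse]
          exact hcase


lemma path_through (A : H.Subgraph) (hconn : A.Connected)
    (hdel : ∀ x : V, (A.deleteVerts {x}).coe.Connected)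
    (hcard : 3 ≤ A.verts.ncard) {u v a b : V} (huv : s(u, v) ∈ A.edgeSet)
    (ha : a ∈ A.verts) (hb : b ∈ A.verts) (hab : a ≠ b) :
    ∃ r : H.Walk a b, r.IsPath ∧ Inside A r ∧ s(u, v) ∈ r.edges := by
  classical
  have hAadj : A.Adj u v := huv
  have hneuv : u ≠ v := (A.adj_sub hAadj).ne
  have hu : u ∈ A.verts := A.edge_vert hAadj
  obtain ⟨q, hqpath, hqin⟩ := exists_path_in A hconn.coe ha hu
  obtain ⟨c, w₀, hw₀c, hw₀in, hw₀uv, haw⟩ := EV A hdel hcard huv q.length a q hqin le_rfl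
  set wa := w₀.rotate a haw with hwadef
  have hwc : wa.IsCycle := hw₀c.rotate haw
  have hsupiff : ∀ y, y ∈ wa.support ↔ y ∈ w₀.support := mem_support_rotate hw₀c haw
  have hedgeiff : ∀ e, e ∈ wa.edges ↔ e ∈ w₀.edges :=
    fun e => (w₀.rotate_edges a haw).perm.mem_iff
  have hwain : Inside A wa :=
    ⟨fun y hy => hw₀in.1 y ((hsupiff y).1 hy), fun e he => hw₀in.2 e ((hedgeiff e).1 he)⟩
  have huvwa : s(u, v) ∈ wa.edges := (hedgeiff _).2 hw₀uv
  by_cases hbw : b ∈ wa.support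
  · obtain ⟨hD1, hD2, hdisjD, hedgesD⟩ := cycle_split hwc hbw hab.symm
    rcases (hedgesD s(u, v)).1 huvwa with hcase | hcase
    · exact ⟨wa.takeUntil b hbw, hD1,
        hwain.mono (wa.support_takeUntil_subset _) (wa.edges_takeUntil_subset _), hcase⟩
    · refine ⟨(wa.dropUntil b hbw).reverse, hD2.reverse, ?_, ?_⟩
      · refine hwain.mono ?_ ?_
        · intro y hy
          rw [Walk.support_reverse, List.mem_reverse] at hy
          exact wa.support_dropUntil_subset _ hy
        · intro e he
          rw [Walk.edges_reverse, List.mem_reverse] at he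
          exact wa.edges_dropUntil_subset _ he
      · rw [Walk.edges_reverse, List.mem_reverse]
        exact hcase
  · have husup : u ∈ wa.support := (hsupiff u).2 (w₀.fst_mem_support_of_mem_edges hw₀uv)
    have hvsup : v ∈ wa.support := (hsupiff v).2 (w₀.snd_mem_support_of_mem_edges hw₀uv)
    obtain ⟨t, htw, hta, htA⟩ : ∃ t, t ∈ wa.support ∧ t ≠ a ∧ t ∈ A.verts := by
      rcases eq_or_ne u a with rfl | hu1
      · exact ⟨v, hvsup, hneuv.symm, A.edge_vert hAadj.symm⟩
      · exact ⟨u, husup, hu1, hu⟩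
    have hbB : b ∈ (A.deleteVerts {a}).verts := by
      rw [Subgraph.deleteVerts_verts]; exact ⟨hb, by simp [hab.symm]⟩
    have htB : t ∈ (A.deleteVerts {a}).verts := by
      rw [Subgraph.deleteVerts_verts]; exact ⟨htA, by simp [hta]⟩
    obtain ⟨P₀, hP₀path, hP₀in⟩ := exists_path_in _ (hdel a) hbB htB
    have htS : t ∈ {y : V | y ∈ wa.support} := htw
    obtain ⟨x, P', hxS, honly, hsubs, hsube⟩ := exists_firstHit P₀ htS
    have hP''path : P'.bypass.IsPath := P'.bypass_isPath
    have hP''s : P'.bypass.support ⊆ P₀.support := fun _ hy => hsubs (P'.support_bypass_subset hy)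
    have hP''e : P'.bypass.edges ⊆ P₀.edges := fun _ he => hsube (P'.edges_bypass_subset he)
    have honly'' : ∀ y ∈ P'.bypass.support, y ∈ wa.support → y = x :=
      fun y hy hyS => honly y (P'.support_bypass_subset hy) hyS
    have hxwa : x ∈ wa.support := hxS
    have hxa : x ≠ a := by
      have hx0 : x ∈ (A.deleteVerts {a}).verts := hP₀in.1 x (hsubs P'.end_mem_support)
      rw [Subgraph.deleteVerts_verts] at hx0
      simpa using hx0.2
    have haP'' : a ∉ P'.bypass.support := by
      intro hc
      have := hP₀in.1 a (hP''s hc)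
      rw [Subgraph.deleteVerts_verts] at this
      simp at this
    obtain ⟨hD1, hD2, hdisjD, hedgesD⟩ := cycle_split hwc hxwa hxa
    have build : ∀ E : H.Walk a x, E.IsPath → (∀ y ∈ E.support, y ∈ wa.support) →
        (∀ e ∈ E.edges, e ∈ wa.edges) → s(u, v) ∈ E.edges →
        ∃ r : H.Walk a b, r.IsPath ∧ Inside A r ∧ s(u, v) ∈ r.edges := by
      intro E hEpath hEs hEe hEuv
      refine ⟨E.append P'.bypass.reverse, ?_, ?_, ?_⟩
      · apply Walk.IsPath.mk'
        rw [Walk.support_append]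
        refine List.Nodup.append hEpath.support_nodup ?_ ?_
        · have := hP''path.reverse.support_nodup
          rw [P'.bypass.reverse.support_eq_cons, List.nodup_cons] at this
          exact this.2
        · intro y hy1 hy2
          have hy2' : y ∈ P'.bypass.reverse.support := by
            rw [P'.bypass.reverse.support_eq_cons, List.mem_cons]; exact Or.inr hy2
          rw [Walk.support_reverse, List.mem_reverse] at hy2'
          have hyx : y = x := honly'' y hy2' (hEs y hy1)
          subst hyx
          have := hP''path.reverse.support_nodup
          rw [P'.bypass.reverse.support_eq_cons, List.nodup_cons] at this
          exact this.1 hy2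
      · constructor
        · intro y hy
          rw [Walk.mem_support_append_iff] at hy
          rcases hy with hy | hy
          · exact hwain.1 y (hEs y hy)
          · rw [Walk.support_reverse, List.mem_reverse] at hy
            have := hP₀in.1 y (hP''s hy)
            rw [Subgraph.deleteVerts_verts] at this
            exact this.1
        · intro e he
          rw [Walk.edges_append, List.mem_append] at he
          rcases he with he | he
          · exact hwain.2 e (hEe e he)
          · rw [Walk.edges_reverse, List.mem_reverse] at he
            exact Subgraph.edgeSet_mono Subgraph.deleteVerts_le (hP₀in.2 e (hP''e he))
      · rw [Walk.edges_append, List.mem_append]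
        exact Or.inl hEuv
    rcases (hedgesD s(u, v)).1 huvwa with hcase | hcase
    · exact build (wa.takeUntil x hxwa) hD1 (fun y hy => wa.support_takeUntil_subset _ hy)
        (fun e he => wa.edges_takeUntil_subset _ he) hcase
    · refine build (wa.dropUntil x hxwa).reverse hD2.reverse ?_ ?_ ?_
      · intro y hy
        rw [Walk.support_reverse, List.mem_reverse] at hy
        exact wa.support_dropUntil_subset _ hy
      · intro e he
        rw [Walk.edges_reverse, List.mem_reverse] at he
        exact wa.edges_dropUntil_subset _ he
      · rw [Walk.edges_reverse, List.mem_reverse]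
        exact hcase


lemma subgraphs_le_finite (D : H.Subgraph) (hD : D.verts.Finite) :
    {C : H.Subgraph | C ≤ D}.Finite := by
  have hE : D.edgeSet.Finite := by
    apply Set.Finite.subset ((hD.prod hD).image (fun p => s(p.1, p.2)))
    intro e he
    induction e with
    | _ x y =>
      have hadj : D.Adj x y := he
      exact ⟨(x, y), ⟨D.edge_vert hadj, D.edge_vert hadj.symm⟩, rfl⟩
  have hinj : Function.Injective (fun C : H.Subgraph => (C.verts, C.edgeSet)) := by
    intro C1 C2 hC
    rw [Prod.mk.injEq] at hC
    ext x y
    · rw [hC.1]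
    · constructor <;> intro hxy
      · exact Subgraph.mem_edgeSet.mp (hC.2 ▸ Subgraph.mem_edgeSet.mpr hxy)
      · exact Subgraph.mem_edgeSet.mp (hC.2 ▸ Subgraph.mem_edgeSet.mpr hxy)
  apply Set.Finite.of_finite_image ?_ hinj.injOn
  apply Set.Finite.subset ((hD.finite_subsets).prod (hE.finite_subsets))
  rintro ⟨vs, es⟩ ⟨C, hC, heq⟩
  rw [Prod.mk.injEq] at heq
  obtain ⟨h1, h2⟩ := heq
  constructor
  · rw [← h1]; exact hC.1
  · rw [← h2]; exact Subgraph.edgeSet_mono hC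

end EarAux

end EarAuxSection

/-- If the edge `uv` of a 2-connected graph `A` lies in exactly `k` cycles of `A`
and `Q` is an ear of `A`, then `uv` lies in at least `k + 1` cycles of `A ⊔ Q`. -/
theorem ear_increases_cycles (H : SimpleGraph V) (A Q : H.Subgraph)
    (hA : SubTwoConn A) (u v : V) (huv : s(u, v) ∈ A.edgeSet) (k : ℕ)
    (hk : (CyclesThroughIn H A s(u, v)).ncard = k)
    (hQ : IsEar A Q) :
    k + 1 ≤ (CyclesThroughIn H (A ⊔ Q) s(u, v)).ncard := by 
  classical
  obtain ⟨hcard, hconn, hdel⟩ := hA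
  obtain ⟨a, b, haF, hbF, p, hp_path, hp_len, hp_sub, hp_int, hp_edges⟩ := hQ
  have hab : a ≠ b := by
    rintro rfl
    rw [Walk.isPath_iff_eq_nil] at hp_path
    subst hp_path
    simp at hp_len
  obtain ⟨r, hr_path, hr_in, hr_uv⟩ := EarAux.path_through A hconn hdel hcard huv haF hbF hab
  have he₀ : ∃ e, e ∈ p.edges ∧ e ∉ A.edgeSet := by
    cases p with
    | nil => exact absurd rfl hab
    | @cons _ c _ h' p₂ =>
      have hm : s(a, c) ∈ (Walk.cons h' p₂).edges := by
        rw [Walk.edges_cons]; exact List.mem_cons_self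
      exact ⟨_, hm, hp_edges _ hm⟩
  have hcyc : (r.append p.reverse).IsCycle := by
    apply EarAux.mk_cycle hr_path hp_path.reverse hab
    · intro y hy1 hy2
      rw [Walk.support_reverse, List.mem_reverse] at hy2
      by_contra hcon
      push_neg at hcon
      exact hp_int y hy2 hcon.1 hcon.2 (hr_in.1 y hy1)
    · rintro ⟨h1, h2⟩
      rw [Walk.edges_reverse, List.mem_reverse] at h2
      exact hp_edges _ h2 (hr_in.2 _ h1)
  have hCbig : (r.append p.reverse).toSubgraph ∈ CyclesThroughIn H (A ⊔ Q) s(u, v) := by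
    refine ⟨⟨a, _, hcyc, rfl⟩, ?_, ?_⟩
    · rw [Walk.toSubgraph_append, Walk.toSubgraph_reverse, hp_sub]
      exact sup_le_sup_right (EarAux.toSubgraph_le hr_in) Q
    · rw [Walk.mem_edges_toSubgraph, Walk.edges_append, List.mem_append]
      exact Or.inl hr_uv
  have hCnot : (r.append p.reverse).toSubgraph ∉ CyclesThroughIn H A s(u, v) := by
    rintro ⟨-, hle, -⟩
    obtain ⟨e₀, he₀mem, he₀not⟩ := he₀
    apply he₀not
    apply Subgraph.edgeSet_mono hle
    rw [Walk.mem_edges_toSubgraph, Walk.edges_append, List.mem_append,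
      Walk.edges_reverse, List.mem_reverse]
    exact Or.inr he₀mem
  have hsub : CyclesThroughIn H A s(u, v) ⊆ CyclesThroughIn H (A ⊔ Q) s(u, v) := by
    rintro C ⟨h1, h2, h3⟩
    exact ⟨h1, h2.trans le_sup_left, h3⟩
  have hAfin : A.verts.Finite := Set.finite_of_ncard_ne_zero (by omega)
  have hQfin : Q.verts.Finite := by
    rw [← hp_sub, Walk.verts_toSubgraph]
    exact Set.Finite.subset p.support.finite_toSet (fun y hy => hy)
  have hbigfin : (CyclesThroughIn H (A ⊔ Q) s(u, v)).Finite := by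
    refine (EarAux.subgraphs_le_finite (A ⊔ Q) ?_).subset ?_
    · rw [Subgraph.verts_sup]; exact hAfin.union hQfin
    · rintro C ⟨-, h2, -⟩; exact h2
  have hsmallfin := hbigfin.subset hsub
  have h1 : (insert ((r.append p.reverse).toSubgraph) (CyclesThroughIn H A s(u, v))).ncard
      = k + 1 := by rw [Set.ncard_insert_of_notMem hCnot hsmallfin, hk]
  rw [← h1]
  exact Set.ncard_le_ncard (Set.insert_subset hCbig hsub) hbigfin
end

section
/- Every θ_3'-graph, obtained from a theta graph θ(p,q,r) by adding an ear whose endpoints are both distinct from the two degree-3 vertices of θ(p,q,r), is a nice 4-cactus: every edge lies in at most 4 cycles and some edge lies in exactly 4 cycles. -/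
open SimpleGraph

variable {V : Type}

namespace ThetaAux


/-- A path between `x` and `y` containing the edge `s(x,y)` has length 1. -/
lemma length_eq_one_of_mem_edges {G : SimpleGraph V} {x y : V}
    {P : G.Walk x y} (hP : P.IsPath) (he : s(x, y) ∈ P.edges) : P.length = 1 := by
  cases P with
  | nil => simp at he
  | @cons _ w _ h P' =>
    rw [Walk.edges_cons, List.mem_cons] at he
    rcases he with he | he
    · have hxw : y = w := by
        rcases Sym2.eq_iff.mp he with ⟨-, h2⟩ | ⟨h1, -⟩
        · exact h2
        · exact absurd (h1 ▸ h) (G.irrefl)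
      subst hxw
      have : P' = Walk.nil := by
        have h2 := hP.of_cons
        cases P' with
        | nil => rfl
        | cons h' P'' =>
          exfalso
          have := hP.2
          simp at this
      subst this; rfl
    · exfalso
      have hx : x ∈ P'.support := Walk.fst_mem_support_of_mem_edges P' he
      have := (Walk.cons_isPath_iff h P').mp hP
      exact this.2 hx

lemma one_le_length_of_ne {G : SimpleGraph V} {x y : V} (hxy : x ≠ y) (P : G.Walk x y) :
    1 ≤ P.length := by
  by_contra h
  push_neg at h
  interval_cases hl : P.length
  · exact hxy (P.eq_of_length_eq_zero hl)

lemma end_mem_tail_support {G : SimpleGraph V} {x y : V} (hxy : x ≠ y) (P : G.Walk x y) :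
    y ∈ P.support.tail := by
  have h := P.end_mem_support
  rw [P.support_eq_cons, List.mem_cons] at h
  rcases h with h | h
  · exact absurd h.symm hxy
  · exact h

/-- Glue two internally disjoint paths into a cycle. -/
lemma isCycle_append {G : SimpleGraph V} {x y : V} (hxy : x ≠ y)
    {P : G.Walk x y} {R : G.Walk y x} (hP : P.IsPath) (hR : R.IsPath)
    (hlen : 3 ≤ P.length + R.length)
    (hd : ∀ w ∈ P.support, w ∈ R.support → w = x ∨ w = y) :
    (P.append R).IsCycle := by
  rw [Walk.isCycle_def]
  refine ⟨?_, ?_, ?_⟩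
  · rw [Walk.isTrail_def, Walk.edges_append, List.nodup_append']
    refine ⟨hP.isTrail.edges_nodup, hR.isTrail.edges_nodup, ?_⟩
    intro e heP heR
    induction e with
    | h c d =>
      have hc : c = x ∨ c = y := hd c (Walk.fst_mem_support_of_mem_edges P heP)
        (Walk.fst_mem_support_of_mem_edges R heR)
      have hdd : d = x ∨ d = y := hd d (Walk.snd_mem_support_of_mem_edges P heP)
        (Walk.snd_mem_support_of_mem_edges R heR)
      have hcd : c ≠ d := (P.adj_of_mem_edges heP).ne
      have hexy : s(c, d) = s(x, y) := by
        rcases hc with rfl | rfl <;> rcases hdd with rfl | rfl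
        · exact absurd rfl hcd
        · rfl
        · exact Sym2.eq_swap
        · exact absurd rfl hcd
      rw [hexy] at heP heR
      have h1 : P.length = 1 := length_eq_one_of_mem_edges hP heP
      have h2 : R.length = 1 := length_eq_one_of_mem_edges hR (Sym2.eq_swap ▸ heR)
      omega
  · intro h
    have : (P.append R).length = 0 := by rw [h]; rfl
    rw [Walk.length_append] at this
    omega
  · have hsupp : (P.append R).support.tail = P.support.tail ++ R.support.tail := by
      rw [Walk.support_append, P.support_eq_cons]
      simp
    rw [hsupp, List.nodup_append']
    refine ⟨hP.support_nodup.tail, hR.support_nodup.tail, ?_⟩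
    intro w hwP hwR
    have hw := hd w (List.mem_of_mem_tail hwP) (List.mem_of_mem_tail hwR)
    rcases hw with rfl | rfl
    · have := hP.support_nodup
      rw [P.support_eq_cons] at this
      exact this.notMem hwP
    · have := hR.support_nodup
      rw [R.support_eq_cons] at this
      exact this.notMem hwR

/-- Glue two paths sharing only the common endpoint into a path. -/
lemma isPath_append {G : SimpleGraph V} {x y z : V}
    {P : G.Walk x y} {R : G.Walk y z} (hP : P.IsPath) (hR : R.IsPath)
    (hd : ∀ w ∈ P.support, w ∈ R.support → w = y) :
    (P.append R).IsPath := by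
  rw [Walk.isPath_def, Walk.support_append, List.nodup_append']
  refine ⟨hP.support_nodup, hR.support_nodup.tail, ?_⟩
  intro w hwP hwR
  have := hd w hwP (List.mem_of_mem_tail hwR)
  subst this
  have := hR.support_nodup
  rw [R.support_eq_cons] at this
  exact this.notMem hwR



lemma subgraph_finite {G : SimpleGraph V} [Finite V] : Finite G.Subgraph := by
  have : Function.Injective (fun C : G.Subgraph => (C.verts, C.Adj)) := by
    intro C D h
    simp only [Prod.mk.injEq] at h
    ext <;> [skip; skip] <;> simp [h.1, h.2]
  exact Finite.of_injective _ this

lemma reachable_of_mem_support {G : SimpleGraph V} {c d x : V} (w : G.Walk c d)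
    (hx : x ∈ w.support) : G.Reachable c x := by
  classical
  exact ⟨w.takeUntil x hx⟩

/-- In a non-nil walk, every support vertex has a neighbour in the walk subgraph. -/
lemma exists_adj_of_mem_support {G : SimpleGraph V} {c d x : V} (w : G.Walk c d)
    (hw : ¬ w.Nil) (hx : x ∈ w.support) : ∃ y, w.toSubgraph.Adj x y := by
  induction w with
  | nil => simp at hw
  | @cons c m d h p ih =>
    rw [Walk.support_cons, List.mem_cons] at hx
    rcases hx with rfl | hx
    · exact ⟨m, Or.inl (by simp)⟩
    · by_cases hp : p.Nil
      · have hsupp : p.support = [m] := Walk.nil_iff_support_eq.mp hp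
        rw [hsupp, List.mem_singleton] at hx
        subst hx
        exact ⟨c, Or.inl (by simp [Sym2.eq_swap])⟩
      · obtain ⟨y, hy⟩ := ih hp hx
        exact ⟨y, Or.inr hy⟩

/-- A cycle subgraph is determined by its edge set. -/
lemma cycleSub_eq_of_edgeSet_eq {G : SimpleGraph V} {C C' : G.Subgraph}
    (hC : IsCycleSub G C) (hC' : IsCycleSub G C')
    (h : C.edgeSet = C'.edgeSet) : C = C' := by
  have hadj : ∀ (D D' : G.Subgraph), D.edgeSet = D'.edgeSet → ∀ x y, D.Adj x y → D'.Adj x y := by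
    intro D D' hDD' x y hxy
    have : s(x, y) ∈ D.edgeSet := hxy
    rw [hDD'] at this
    exact this
  have hverts : ∀ (D : G.Subgraph), IsCycleSub G D → D.verts = {x | ∃ y, D.Adj x y} := by
    rintro D ⟨c, w, hcyc, rfl⟩
    ext x
    constructor
    · intro hx
      rw [Walk.mem_verts_toSubgraph] at hx
      exact exists_adj_of_mem_support w hcyc.not_nil hx
    · rintro ⟨y, hy⟩
      exact w.toSubgraph.edge_vert hy
  ext x y
  · rw [hverts C hC, hverts C' hC']
    constructor
    · rintro ⟨y, hy⟩; exact ⟨y, hadj C C' h x y hy⟩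
    · rintro ⟨y, hy⟩; exact ⟨y, hadj C' C h.symm x y hy⟩
  · constructor
    · exact hadj C C' h x y
    · exact hadj C' C h.symm x y

lemma ncard_eq_four {α : Type*} {S : Set α} (hfin : S.Finite) (hle : S.ncard ≤ 4)
    {a b c d : α} (ha : a ∈ S) (hb : b ∈ S) (hc : c ∈ S) (hd : d ∈ S)
    (hab : a ≠ b) (hac : a ≠ c) (had : a ≠ d) (hbc : b ≠ c) (hbd : b ≠ d) (hcd : c ≠ d) :
    S.ncard = 4 := by
  refine le_antisymm hle ?_
  have hsub : ({a, b, c, d} : Set α) ⊆ S := by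
    intro x hx
    rcases hx with rfl | rfl | rfl | rfl
    exacts [ha, hb, hc, hd]
  calc (4 : ℕ) = ({a, b, c, d} : Set α).ncard := by
        rw [Set.ncard_insert_of_notMem (by simp [hab, hac, had]),
          Set.ncard_insert_of_notMem (by simp [hbc, hbd]),
          Set.ncard_insert_of_notMem (by simp [hcd]), Set.ncard_singleton]
    _ ≤ S.ncard := Set.ncard_le_ncard hsub hfin



lemma iUnion_fin3 {α : Type*} (f : Fin 3 → Set α) : (⋃ i, f i) = f 0 ∪ f 1 ∪ f 2 := by
  ext x
  simp only [Set.mem_iUnion, Set.mem_union]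
  constructor
  · rintro ⟨i, h⟩
    fin_cases i
    exacts [Or.inl (Or.inl h), Or.inl (Or.inr h), Or.inr h]
  · rintro ((h | h) | h)
    exacts [⟨0, h⟩, ⟨1, h⟩, ⟨2, h⟩]

lemma ncard_list_le {α : Type*} [DecidableEq α] (l : List α) :
    {x | x ∈ l}.ncard ≤ l.length := by
  rw [← List.coe_toFinset, Set.ncard_coe_finset]
  exact l.toFinset_card_le

lemma ncard_list_eq {α : Type*} [DecidableEq α] {l : List α} (h : l.Nodup) :
    {x | x ∈ l}.ncard = l.length := by
  rw [← List.coe_toFinset, Set.ncard_coe_finset, List.toFinset_card_of_nodup h]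

lemma ends_ne_of_isPath {G : SimpleGraph V} {x y : V} {P : G.Walk x y}
    (hP : P.IsPath) (h1 : 1 ≤ P.length) : x ≠ y := by
  rintro rfl
  cases P with
  | nil => simp at h1
  | cons h P' =>
    rw [Walk.cons_isPath_iff] at hP
    exact hP.2 P'.end_mem_support

variable [DecidableEq V]

/-- The (mod 2) indicator chain of a walk's edges. -/
def chain {G : SimpleGraph V} : ∀ {c d : V}, G.Walk c d → (G.edgeSet → ZMod 2)
  | _, _, Walk.nil => 0
  | _, _, @Walk.cons _ _ c m _ h p =>
      Pi.single (⟨s(c, m), (SimpleGraph.mem_edgeSet G).mpr h⟩ : G.edgeSet) 1 + chain p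

lemma chain_cons {G : SimpleGraph V} {c m d : V} (h : G.Adj c m) (p : G.Walk m d) :
    chain (Walk.cons h p) =
      Pi.single (⟨s(c, m), (SimpleGraph.mem_edgeSet G).mpr h⟩ : G.edgeSet) 1 + chain p := rfl

lemma chain_apply {G : SimpleGraph V} {c d : V} (w : G.Walk c d) (hw : w.IsTrail)
    (e : G.edgeSet) : chain w e = if (e : Sym2 V) ∈ w.edges then 1 else 0 := by
  induction w with
  | nil => simp [chain]
  | @cons c m d h p ih =>
    have hp : p.IsTrail := hw.of_cons
    have hne : s(c, m) ∉ p.edges := by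
      have := hw.edges_nodup
      rw [Walk.edges_cons] at this
      exact (List.nodup_cons.mp this).1
    rw [chain_cons, Walk.edges_cons]
    by_cases he : e = (⟨s(c, m), (SimpleGraph.mem_edgeSet G).mpr h⟩ : G.edgeSet)
    · subst he
      simp [Pi.single_apply, ih hp, hne]
    · have he' : (e : Sym2 V) ≠ s(c, m) := fun hh => he (Subtype.ext hh)
      simp [Pi.single_apply, ih hp, he, he', Subtype.ext_iff]

variable [Fintype V]

noncomputable instance edgeSetFintype (G : SimpleGraph V) : Fintype G.edgeSet :=
  Fintype.ofFinite _

/-- The boundary map from edge chains to vertex chains. -/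
noncomputable def bd (G : SimpleGraph V) :
    (G.edgeSet → ZMod 2) →ₗ[ZMod 2] (V → ZMod 2) where
  toFun f := fun x => ∑ e : G.edgeSet, f e * (if x ∈ (e : Sym2 V) then 1 else 0)
  map_add' f g := by
    funext x
    simp only [Pi.add_apply]
    rw [← Finset.sum_add_distrib]
    congr 1
    funext e
    ring
  map_smul' r f := by
    funext x
    simp [Finset.mul_sum, mul_assoc]

lemma bd_single {G : SimpleGraph V} (e : G.edgeSet) :
    bd G (Pi.single e 1) = fun x => if x ∈ (e : Sym2 V) then 1 else 0 := by
  funext x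
  simp only [bd, LinearMap.coe_mk, AddHom.coe_mk]
  rw [Finset.sum_eq_single e]
  · simp
  · intro e' _ hne
    rw [Pi.single_apply]
    simp [hne]
  · intro h
    exact absurd (Finset.mem_univ e) h

lemma bd_chain {G : SimpleGraph V} {c d : V} (w : G.Walk c d) :
    bd G (chain w) = Pi.single c 1 + Pi.single d 1 := by
  induction w with
  | nil =>
    show bd G 0 = _
    rw [map_zero]
    funext x
    exact (CharTwo.add_self_eq_zero _).symm
  | @cons c m d h p ih =>
    rw [chain_cons, map_add, ih, bd_single]
    funext x
    have hcm : c ≠ m := h.ne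
    simp only [Pi.add_apply, Pi.single_apply, Sym2.mem_iff]
    by_cases hxc : x = c <;> by_cases hxm : x = m <;> by_cases hxd : x = d <;>
      simp_all <;> decide


section Bound

attribute [local instance] Classical.propDecidable

lemma chi_mem_ker {G : SimpleGraph V} {C : G.Subgraph} (hC : IsCycleSub G C) :
    (fun ε : G.edgeSet => if (ε : Sym2 V) ∈ C.edgeSet then (1 : ZMod 2) else 0) ∈
      LinearMap.ker (bd G) := by
  obtain ⟨c, w, hcyc, rfl⟩ := hC
  have hfun : (fun ε : G.edgeSet =>
      if (ε : Sym2 V) ∈ w.toSubgraph.edgeSet then (1 : ZMod 2) else 0) = chain w := by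
    funext ε
    rw [chain_apply w hcyc.isCircuit.isTrail, Walk.edgeSet_toSubgraph]
    exact ite_congr rfl (fun _ => rfl) (fun _ => rfl)
  rw [hfun, LinearMap.mem_ker, bd_chain]
  funext x
  exact CharTwo.add_self_eq_zero _

lemma cycles_bound {G : SimpleGraph V} (hpre : G.Preconnected) (v0 : V)
    (hm : Fintype.card G.edgeSet ≤ Fintype.card V + 2) :
    ∀ e ∈ G.edgeSet, (CyclesThrough G e).ncard ≤ 4 := by
  intro e he
  set K := LinearMap.ker (bd G) with hK
  -- the kernel has at most 8 elements
  have hsup : LinearMap.range (bd G) ⊔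
      Submodule.span (ZMod 2) {Pi.single v0 (1 : ZMod 2)} = ⊤ := by
    rw [eq_top_iff]
    intro f _
    rw [pi_eq_sum_univ f]
    apply Submodule.sum_mem
    intro x _
    apply Submodule.smul_mem
    have hfs : (fun j => if x = j then (1 : ZMod 2) else 0) = Pi.single x 1 := by
      funext j
      simp [Pi.single_apply, eq_comm]
    rw [hfs]
    have hxv : Pi.single x (1 : ZMod 2) =
        ((Pi.single v0 1 : V → ZMod 2) + (Pi.single x 1 : V → ZMod 2)) +
          (Pi.single v0 1 : V → ZMod 2) := by
      funext j
      simp only [Pi.add_apply]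
      exact (by decide : ∀ p q : ZMod 2, q = p + q + p) _ _
    rw [hxv]
    apply Submodule.add_mem
    · apply Submodule.mem_sup_left
      obtain ⟨w⟩ := hpre v0 x
      exact ⟨chain w, bd_chain w⟩
    · exact Submodule.mem_sup_right (Submodule.mem_span_singleton_self _)
  have hsingle_ne : (Pi.single v0 1 : V → ZMod 2) ≠ 0 := by
    intro h
    have := congrFun h v0
    simp at this
  have hrank : Module.finrank (ZMod 2) K ≤ 3 := by
    rw [hK]
    have h1 := LinearMap.finrank_range_add_finrank_ker (bd G)
    rw [Module.finrank_fintype_fun_eq_card] at h1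
    have h2 := Submodule.finrank_sup_add_finrank_inf_eq
      (LinearMap.range (bd G)) (Submodule.span (ZMod 2) {Pi.single v0 (1 : ZMod 2)})
    rw [hsup, finrank_top, Module.finrank_fintype_fun_eq_card,
      finrank_span_singleton hsingle_ne] at h2
    omega
  haveI : Fintype K := Fintype.ofFinite _
  have hKcard : Fintype.card K ≤ 8 := by
    have := Module.card_eq_pow_finrank (K := ZMod 2) (V := K)
    rw [this, ZMod.card]
    calc (2:ℕ) ^ Module.finrank (ZMod 2) K ≤ 2 ^ 3 :=
      Nat.pow_le_pow_right (by norm_num) hrank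
    _ = 8 := by norm_num
  -- split the kernel according to the value at e
  set S1 : Set (G.edgeSet → ZMod 2) := {f | f ∈ K ∧ f ⟨e, he⟩ = 1} with hS1
  set S0 : Set (G.edgeSet → ZMod 2) := {f | f ∈ K ∧ f ⟨e, he⟩ = 0} with hS0
  have hS1card : S1.ncard ≤ 4 := by
    rcases Set.eq_empty_or_nonempty S1 with hemp | ⟨x0, hx0⟩
    · simp [hemp]
    · have hinj : Set.InjOn (fun y => y + x0) S1 := fun y1 _ y2 _ h =>
        add_right_cancel h
      have hmap : ∀ y ∈ S1, y + x0 ∈ S0 := by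
        intro y hy
        refine ⟨K.add_mem hy.1 hx0.1, ?_⟩
        show y ⟨e, he⟩ + x0 ⟨e, he⟩ = 0
        rw [hy.2, hx0.2]
        decide
      have hle : S1.ncard ≤ S0.ncard := by
        apply Set.ncard_le_ncard_of_injOn _ hmap hinj (Set.toFinite _)
      have hunion : S0 ∪ S1 = (K : Set (G.edgeSet → ZMod 2)) := by
        ext f
        constructor
        · rintro (hf | hf) <;> exact hf.1
        · intro hf
          have : f ⟨e, he⟩ = 0 ∨ f ⟨e, he⟩ = 1 :=
            (by decide : ∀ z : ZMod 2, z = 0 ∨ z = 1) _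
          rcases this with h | h
          · exact Or.inl ⟨hf, h⟩
          · exact Or.inr ⟨hf, h⟩
      have hdisj : Disjoint S0 S1 := by
        rw [Set.disjoint_left]
        rintro f ⟨-, h0⟩ ⟨-, h1⟩
        rw [h0] at h1
        exact zero_ne_one h1
      have hcards : S0.ncard + S1.ncard ≤ 8 := by
        rw [← Set.ncard_union_eq hdisj (Set.toFinite _) (Set.toFinite _), hunion]
        calc (K : Set (G.edgeSet → ZMod 2)).ncard = Nat.card K := by
              rw [← Nat.card_coe_set_eq]; rfl
          _ = Fintype.card K := Nat.card_eq_fintype_card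
          _ ≤ 8 := hKcard
      omega
  -- inject cycles through e into S1
  have hmapsto : ∀ C ∈ CyclesThrough G e,
      (fun ε : G.edgeSet => if (ε : Sym2 V) ∈ C.edgeSet then (1 : ZMod 2) else 0) ∈ S1 := by
    rintro C ⟨hC, heC⟩
    exact ⟨chi_mem_ker hC, by simp [heC]⟩
  have hinj : Set.InjOn
      (fun C : G.Subgraph =>
        (fun ε : G.edgeSet => if (ε : Sym2 V) ∈ C.edgeSet then (1 : ZMod 2) else 0))
      (CyclesThrough G e) := by
    rintro C ⟨hC, -⟩ C' ⟨hC', -⟩ hfeq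
    apply cycleSub_eq_of_edgeSet_eq hC hC'
    ext s
    constructor
    · intro hs
      have hsG : s ∈ G.edgeSet := C.edgeSet_subset hs
      have := congrFun hfeq ⟨s, hsG⟩
      simp only [hs, if_true] at this
      by_contra hs'
      simp only [hs', if_false] at this
      exact one_ne_zero this
    · intro hs
      have hsG : s ∈ G.edgeSet := C'.edgeSet_subset hs
      have := congrFun hfeq ⟨s, hsG⟩
      simp only [hs, if_true] at this
      by_contra hs'
      simp only [hs', if_false] at this
      exact zero_ne_one this
  calc (CyclesThrough G e).ncard ≤ S1.ncard :=
      Set.ncard_le_ncard_of_injOn _ hmapsto hinj (Set.toFinite _)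
    _ ≤ 4 := hS1card

end Bound

lemma toSubgraph_ne_of_edge {G : SimpleGraph V} {c d : V} {w1 : G.Walk c c} {w2 : G.Walk d d}
    (e : Sym2 V) (h1 : e ∈ w1.edges) (h2 : e ∉ w2.edges) :
    w1.toSubgraph ≠ w2.toSubgraph := by
  intro h
  have h1' : e ∈ w1.toSubgraph.edgeSet := by rw [Walk.edgeSet_toSubgraph]; exact h1
  rw [h, Walk.edgeSet_toSubgraph] at h1'
  exact h2 h1'

lemma exists_edge {G : SimpleGraph V} {c d : V} {w : G.Walk c d} (h : 1 ≤ w.length) :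
    ∃ e, e ∈ w.edges := by
  apply List.exists_mem_of_ne_nil
  apply List.ne_nil_of_length_pos
  rw [Walk.length_edges]
  omega

section Case2

variable [Fintype V] [DecidableEq V]

lemma case2 {G : SimpleGraph V}
    (hbound : ∀ e ∈ G.edgeSet, (CyclesThrough G e).ncard ≤ 4)
    {u v x y : V} (huv : u ≠ v) (hxu : x ≠ u) (hxv : x ≠ v) (hyu : y ≠ u) (hyv : y ≠ v)
    (hxy : x ≠ y)
    (S1 : G.Walk u x) (S2 : G.Walk x y) (S3 : G.Walk y v)
    {P2 P3 : G.Walk u v} {q : G.Walk x y}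
    (hP : (S1.append (S2.append S3)).IsPath) (hP2 : P2.IsPath) (hP3 : P3.IsPath)
    (hq : q.IsPath) (hq1 : 1 ≤ q.length)
    (hd12 : ∀ w ∈ (S1.append (S2.append S3)).support, w ∈ P2.support → w = u ∨ w = v)
    (hd13 : ∀ w ∈ (S1.append (S2.append S3)).support, w ∈ P3.support → w = u ∨ w = v)
    (hd23 : ∀ w ∈ P2.support, w ∈ P3.support → w = u ∨ w = v)
    (h23len : ¬(P2.length = 1 ∧ P3.length = 1))
    (hqsupp : ∀ w ∈ q.support, w ≠ x → w ≠ y →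
        w ∉ (S1.append (S2.append S3)).support ∧ w ∉ P2.support ∧ w ∉ P3.support)
    (hqedge : ∀ e ∈ q.edges,
        e ∉ (S1.append (S2.append S3)).edges ∧ e ∉ P2.edges ∧ e ∉ P3.edges) :
    ∃ e ∈ G.edgeSet, (CyclesThrough G e).ncard = 4 := by
  haveI : Finite G.Subgraph := subgraph_finite
  set PP := S1.append (S2.append S3) with hPP
  have hS1 : S1.IsPath := Walk.IsPath.of_append_left hP
  have hS23 : (S2.append S3).IsPath := Walk.IsPath.of_append_right hP
  have hS2 : S2.IsPath := Walk.IsPath.of_append_left hS23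
  have hS3 : S3.IsPath := Walk.IsPath.of_append_right hS23
  have hS1len : 1 ≤ S1.length := one_le_length_of_ne hxu.symm S1
  have hS2len : 1 ≤ S2.length := one_le_length_of_ne hxy S2
  have hS3len : 1 ≤ S3.length := one_le_length_of_ne hyv S3
  have hP2len : 1 ≤ P2.length := one_le_length_of_ne huv P2
  have hP3len : 1 ≤ P3.length := one_le_length_of_ne huv P3
  have hPPlen : PP.length = S1.length + S2.length + S3.length := by
    rw [hPP, Walk.length_append, Walk.length_append]
    omega
  -- support decomposition of PP
  have hsupp_eq : PP.support = S1.support ++ (S2.support.tail ++ S3.support.tail) := by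
    rw [hPP, Walk.support_append, Walk.support_append]
    rw [S2.support_eq_cons]
    simp
  have hnd := hP.support_nodup
  rw [hsupp_eq, List.nodup_append'] at hnd
  obtain ⟨hnd1, hnd23, hdisjS⟩ := hnd
  rw [List.nodup_append'] at hnd23
  obtain ⟨hnd2t, hnd3t, hdisj23⟩ := hnd23
  have hyS2t : y ∈ S2.support.tail := end_mem_tail_support hxy S2
  have hxS1 : x ∈ S1.support := S1.end_mem_support
  have fS12 : ∀ w ∈ S1.support, w ∈ S2.support → w = x := by
    intro w hw hw2
    rw [S2.support_eq_cons, List.mem_cons] at hw2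
    rcases hw2 with rfl | hw2
    · rfl
    · exact absurd (List.mem_append_left _ hw2) (hdisjS hw)
  have fS13 : ∀ w ∈ S1.support, w ∈ S3.support → False := by
    intro w hw hw3
    rw [S3.support_eq_cons, List.mem_cons] at hw3
    rcases hw3 with rfl | hw3
    · exact (hdisjS hw) (List.mem_append_left _ hyS2t)
    · exact (hdisjS hw) (List.mem_append_right _ hw3)
  have fS23 : ∀ w ∈ S2.support, w ∈ S3.support → w = y := by
    intro w hw2 hw3
    rw [S3.support_eq_cons, List.mem_cons] at hw3
    rcases hw3 with rfl | hw3
    · rfl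
    · rw [S2.support_eq_cons, List.mem_cons] at hw2
      rcases hw2 with rfl | hw2
      · exact absurd (List.mem_append_right _ hw3) (hdisjS hxS1)
      · exact absurd hw3 (hdisj23 hw2)
  -- memberships in PP
  have hS1P : ∀ w ∈ S1.support, w ∈ PP.support := by
    intro w hw; rw [hsupp_eq]; exact List.mem_append_left _ hw
  have hS2P : ∀ w ∈ S2.support, w ∈ PP.support := by
    intro w hw
    rw [S2.support_eq_cons, List.mem_cons] at hw
    rcases hw with rfl | hw
    · exact hS1P _ hxS1
    · rw [hsupp_eq]; exact List.mem_append_right _ (List.mem_append_left _ hw)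
  have hS3P : ∀ w ∈ S3.support, w ∈ PP.support := by
    intro w hw
    rw [S3.support_eq_cons, List.mem_cons] at hw
    rcases hw with rfl | hw
    · exact hS2P _ S2.end_mem_support
    · rw [hsupp_eq]; exact List.mem_append_right _ (List.mem_append_right _ hw)
  have hxP2 : x ∉ P2.support := by
    intro h
    rcases hd12 x (hS1P _ hxS1) h with rfl | rfl
    · exact hxu rfl
    · exact hxv rfl
  have hxP3 : x ∉ P3.support := by
    intro h
    rcases hd13 x (hS1P _ hxS1) h with rfl | rfl
    · exact hxu rfl
    · exact hxv rfl
  have hyP2 : y ∉ P2.support := by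
    intro h
    rcases hd12 y (hS2P _ S2.end_mem_support) h with rfl | rfl
    · exact hyu rfl
    · exact hyv rfl
  have hyP3 : y ∉ P3.support := by
    intro h
    rcases hd13 y (hS2P _ S2.end_mem_support) h with rfl | rfl
    · exact hyu rfl
    · exact hyv rfl
  -- the middle path X via the ear
  have hqS3 : (q.append S3).IsPath := by
    apply isPath_append hq hS3
    intro w hwq hw3
    by_cases hwx : w = x
    · subst hwx; exact absurd hw3 (fun h => fS13 _ hxS1 h)
    · by_cases hwy : w = y
      · exact hwy
      · exact absurd (hS3P _ hw3) (hqsupp w hwq hwx hwy).1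
  have hX : (S1.append (q.append S3)).IsPath := by
    apply isPath_append hS1 hqS3
    intro w hw1 hwqs
    rw [Walk.mem_support_append_iff] at hwqs
    rcases hwqs with hwq | hw3
    · by_cases hwx : w = x
      · exact hwx
      · by_cases hwy : w = y
        · subst hwy; exact absurd hw1 (fun h => fS13 _ h S3.start_mem_support)
        · exact absurd (hS1P _ hw1) (hqsupp w hwq hwx hwy).1
    · exact absurd hw3 (fun h => fS13 _ hw1 h)
  set X := S1.append (q.append S3) with hXdef
  have hXlen : X.length = S1.length + q.length + S3.length := by
    rw [hXdef, Walk.length_append, Walk.length_append]; omega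
  have hXsupp : ∀ w ∈ X.support, w ∈ PP.support ∨ w ∈ q.support := by
    intro w hw
    rw [hXdef, Walk.mem_support_append_iff, Walk.mem_support_append_iff] at hw
    rcases hw with hw | hw | hw
    · exact Or.inl (hS1P _ hw)
    · exact Or.inr hw
    · exact Or.inl (hS3P _ hw)
  -- disjointness of X with P2, P3
  have hdX2 : ∀ w ∈ X.support, w ∈ P2.support → w = u ∨ w = v := by
    intro w hw hw2
    rcases hXsupp w hw with hw | hw
    · exact hd12 w hw hw2
    · by_cases hwx : w = x
      · subst hwx; exact absurd hw2 hxP2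
      · by_cases hwy : w = y
        · subst hwy; exact absurd hw2 hyP2
        · exact absurd hw2 (hqsupp w hw hwx hwy).2.1
  have hdX3 : ∀ w ∈ X.support, w ∈ P3.support → w = u ∨ w = v := by
    intro w hw hw3
    rcases hXsupp w hw with hw | hw
    · exact hd13 w hw hw3
    · by_cases hwx : w = x
      · subst hwx; exact absurd hw3 hxP3
      · by_cases hwy : w = y
        · subst hwy; exact absurd hw3 hyP3
        · exact absurd hw3 (hqsupp w hw hwx hwy).2.2
  -- the four cycles
  have hrev2 : ∀ w ∈ P2.reverse.support, w ∈ P2.support := by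
    intro w hw; rwa [Walk.support_reverse, List.mem_reverse] at hw
  have hrev3 : ∀ w ∈ P3.reverse.support, w ∈ P3.support := by
    intro w hw; rwa [Walk.support_reverse, List.mem_reverse] at hw
  have cyc1 : (PP.append P2.reverse).IsCycle := by
    apply isCycle_append huv hP hP2.reverse
    · rw [Walk.length_reverse]; omega
    · intro w hw hw2; exact hd12 w hw (hrev2 w hw2)
  have cyc2 : (PP.append P3.reverse).IsCycle := by
    apply isCycle_append huv hP hP3.reverse
    · rw [Walk.length_reverse]; omega
    · intro w hw hw2; exact hd13 w hw (hrev3 w hw2)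
  have cyc3 : (X.append P2.reverse).IsCycle := by
    apply isCycle_append huv hX hP2.reverse
    · rw [Walk.length_reverse]; omega
    · intro w hw hw2; exact hdX2 w hw (hrev2 w hw2)
  have cyc4 : (X.append P3.reverse).IsCycle := by
    apply isCycle_append huv hX hP3.reverse
    · rw [Walk.length_reverse]; omega
    · intro w hw hw2; exact hdX3 w hw (hrev3 w hw2)
  -- edge relations
  have hPPedges : PP.edges = S1.edges ++ (S2.edges ++ S3.edges) := by
    rw [hPP, Walk.edges_append, Walk.edges_append]
  have hedge_PP_P2 : ∀ e ∈ PP.edges, e ∉ P2.edges := by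
    intro e hePP heP2
    induction e with
    | h c d =>
      have hc : c = u ∨ c = v := hd12 c (Walk.fst_mem_support_of_mem_edges _ hePP)
        (Walk.fst_mem_support_of_mem_edges _ heP2)
      have hd' : d = u ∨ d = v := hd12 d (Walk.snd_mem_support_of_mem_edges _ hePP)
        (Walk.snd_mem_support_of_mem_edges _ heP2)
      have hcd : c ≠ d := (PP.adj_of_mem_edges hePP).ne
      have he : s(c, d) = s(u, v) := by
        rcases hc with rfl | rfl <;> rcases hd' with rfl | rfl
        · exact absurd rfl hcd
        · rfl
        · exact Sym2.eq_swap
        · exact absurd rfl hcd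
      rw [he] at hePP
      have := length_eq_one_of_mem_edges hP hePP
      omega
  have hedge_PP_P3 : ∀ e ∈ PP.edges, e ∉ P3.edges := by
    intro e hePP heP3
    induction e with
    | h c d =>
      have hc : c = u ∨ c = v := hd13 c (Walk.fst_mem_support_of_mem_edges _ hePP)
        (Walk.fst_mem_support_of_mem_edges _ heP3)
      have hd' : d = u ∨ d = v := hd13 d (Walk.snd_mem_support_of_mem_edges _ hePP)
        (Walk.snd_mem_support_of_mem_edges _ heP3)
      have hcd : c ≠ d := (PP.adj_of_mem_edges hePP).ne
      have he : s(c, d) = s(u, v) := by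
        rcases hc with rfl | rfl <;> rcases hd' with rfl | rfl
        · exact absurd rfl hcd
        · rfl
        · exact Sym2.eq_swap
        · exact absurd rfl hcd
      rw [he] at hePP
      have := length_eq_one_of_mem_edges hP hePP
      omega
  have hedge_P2_P3 : ∀ e ∈ P2.edges, e ∉ P3.edges := by
    intro e heP2 heP3
    induction e with
    | h c d =>
      have hc : c = u ∨ c = v := hd23 c (Walk.fst_mem_support_of_mem_edges _ heP2)
        (Walk.fst_mem_support_of_mem_edges _ heP3)
      have hd' : d = u ∨ d = v := hd23 d (Walk.snd_mem_support_of_mem_edges _ heP2)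
        (Walk.snd_mem_support_of_mem_edges _ heP3)
      have hcd : c ≠ d := (P2.adj_of_mem_edges heP2).ne
      have he : s(c, d) = s(u, v) := by
        rcases hc with rfl | rfl <;> rcases hd' with rfl | rfl
        · exact absurd rfl hcd
        · rfl
        · exact Sym2.eq_swap
        · exact absurd rfl hcd
      rw [he] at heP2 heP3
      exact h23len ⟨length_eq_one_of_mem_edges hP2 heP2,
        length_eq_one_of_mem_edges hP3 heP3⟩
  have hXedges : X.edges = S1.edges ++ (q.edges ++ S3.edges) := by
    rw [hXdef, Walk.edges_append, Walk.edges_append]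
  -- choose the distinguished edges
  obtain ⟨e0, he0⟩ := exists_edge (w := S1) hS1len
  have he0G : e0 ∈ G.edgeSet := S1.edges_subset_edgeSet he0
  have he0PP : e0 ∈ PP.edges := by rw [hPPedges]; exact List.mem_append_left _ he0
  have he0X : e0 ∈ X.edges := by rw [hXedges]; exact List.mem_append_left _ he0
  obtain ⟨eq0, heq0⟩ := exists_edge (w := q) hq1
  obtain ⟨e2, he2⟩ := exists_edge (w := P2) hP2len
  -- membership of the four cycle subgraphs
  have mem1 : (PP.append P2.reverse).toSubgraph ∈ CyclesThrough G e0 := by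
    refine ⟨⟨u, _, cyc1, rfl⟩, ?_⟩
    rw [Walk.edgeSet_toSubgraph]
    show e0 ∈ (PP.append P2.reverse).edges
    rw [Walk.edges_append]
    exact List.mem_append_left _ he0PP
  have mem2 : (PP.append P3.reverse).toSubgraph ∈ CyclesThrough G e0 := by
    refine ⟨⟨u, _, cyc2, rfl⟩, ?_⟩
    rw [Walk.edgeSet_toSubgraph]
    show e0 ∈ (PP.append P3.reverse).edges
    rw [Walk.edges_append]
    exact List.mem_append_left _ he0PP
  have mem3 : (X.append P2.reverse).toSubgraph ∈ CyclesThrough G e0 := by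
    refine ⟨⟨u, _, cyc3, rfl⟩, ?_⟩
    rw [Walk.edgeSet_toSubgraph]
    show e0 ∈ (X.append P2.reverse).edges
    rw [Walk.edges_append]
    exact List.mem_append_left _ he0X
  have mem4 : (X.append P3.reverse).toSubgraph ∈ CyclesThrough G e0 := by
    refine ⟨⟨u, _, cyc4, rfl⟩, ?_⟩
    rw [Walk.edgeSet_toSubgraph]
    show e0 ∈ (X.append P3.reverse).edges
    rw [Walk.edges_append]
    exact List.mem_append_left _ he0X
  -- distinctness
  have heq0X : eq0 ∈ X.edges := by
    rw [hXedges]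
    exact List.mem_append_right _ (List.mem_append_left _ heq0)
  have heq0n1 : eq0 ∉ (PP.append P2.reverse).edges := by
    rw [Walk.edges_append, List.mem_append]
    rintro (h | h)
    · exact (hqedge eq0 heq0).1 h
    · rw [Walk.edges_reverse, List.mem_reverse] at h
      exact (hqedge eq0 heq0).2.1 h
  have heq0n2 : eq0 ∉ (PP.append P3.reverse).edges := by
    rw [Walk.edges_append, List.mem_append]
    rintro (h | h)
    · exact (hqedge eq0 heq0).1 h
    · rw [Walk.edges_reverse, List.mem_reverse] at h
      exact (hqedge eq0 heq0).2.2 h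
  have he2n2 : e2 ∉ (PP.append P3.reverse).edges := by
    rw [Walk.edges_append, List.mem_append]
    rintro (h | h)
    · exact hedge_PP_P2 e2 h he2
    · rw [Walk.edges_reverse, List.mem_reverse] at h
      exact hedge_P2_P3 e2 he2 h
  have he2n4 : e2 ∉ (X.append P3.reverse).edges := by
    rw [Walk.edges_append, List.mem_append]
    rintro (h | h)
    · rw [hXedges, List.mem_append, List.mem_append] at h
      rcases h with h | h | h
      · exact hedge_PP_P2 e2 (by rw [hPPedges]; exact List.mem_append_left _ h) he2
      · exact (hqedge e2 h).2.1 he2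
      · exact hedge_PP_P2 e2
          (by rw [hPPedges]; exact List.mem_append_right _ (List.mem_append_right _ h)) he2
    · rw [Walk.edges_reverse, List.mem_reverse] at h
      exact hedge_P2_P3 e2 he2 h
  have he2in1 : e2 ∈ (PP.append P2.reverse).edges := by
    rw [Walk.edges_append, List.mem_append, Walk.edges_reverse, List.mem_reverse]
    exact Or.inr he2
  have he2in3 : e2 ∈ (X.append P2.reverse).edges := by
    rw [Walk.edges_append, List.mem_append, Walk.edges_reverse, List.mem_reverse]
    exact Or.inr he2
  have heq0in3 : eq0 ∈ (X.append P2.reverse).edges := by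
    rw [Walk.edges_append, List.mem_append]
    exact Or.inl heq0X
  have heq0in4 : eq0 ∈ (X.append P3.reverse).edges := by
    rw [Walk.edges_append, List.mem_append]
    exact Or.inl heq0X
  have d12 : (PP.append P2.reverse).toSubgraph ≠ (PP.append P3.reverse).toSubgraph :=
    toSubgraph_ne_of_edge e2 he2in1 he2n2
  have d13 : (PP.append P2.reverse).toSubgraph ≠ (X.append P2.reverse).toSubgraph :=
    fun h => (toSubgraph_ne_of_edge eq0 heq0in3 heq0n1) h.symm
  have d14 : (PP.append P2.reverse).toSubgraph ≠ (X.append P3.reverse).toSubgraph :=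
    fun h => (toSubgraph_ne_of_edge eq0 heq0in4 heq0n1) h.symm
  have d23 : (PP.append P3.reverse).toSubgraph ≠ (X.append P2.reverse).toSubgraph :=
    fun h => (toSubgraph_ne_of_edge eq0 heq0in3 heq0n2) h.symm
  have d24 : (PP.append P3.reverse).toSubgraph ≠ (X.append P3.reverse).toSubgraph :=
    fun h => (toSubgraph_ne_of_edge eq0 heq0in4 heq0n2) h.symm
  have d34 : (X.append P2.reverse).toSubgraph ≠ (X.append P3.reverse).toSubgraph :=
    toSubgraph_ne_of_edge e2 he2in3 he2n4
  exact ⟨e0, he0G, ncard_eq_four (Set.toFinite _) (hbound e0 he0G)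
    mem1 mem2 mem3 mem4 d12 d13 d14 d23 d24 d34⟩

end Case2

section Case1

variable [Fintype V] [DecidableEq V]

lemma case1 {G : SimpleGraph V}
    (hbound : ∀ e ∈ G.edgeSet, (CyclesThrough G e).ncard ≤ 4)
    {u v x y : V} (huv : u ≠ v) (hxu : x ≠ u) (hxv : x ≠ v) (hyu : y ≠ u) (hyv : y ≠ v)
    (S1 : G.Walk u x) (S2 : G.Walk x v) (R1 : G.Walk u y) (R2 : G.Walk y v)
    {T : G.Walk u v} {q : G.Walk x y}
    (hP1 : (S1.append S2).IsPath) (hP2 : (R1.append R2).IsPath) (hT : T.IsPath)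
    (hq : q.IsPath) (hq1 : 1 ≤ q.length)
    (hd12 : ∀ w ∈ (S1.append S2).support, w ∈ (R1.append R2).support → w = u ∨ w = v)
    (hd13 : ∀ w ∈ (S1.append S2).support, w ∈ T.support → w = u ∨ w = v)
    (hd23 : ∀ w ∈ (R1.append R2).support, w ∈ T.support → w = u ∨ w = v)
    (h2Tlen : ¬((R1.append R2).length = 1 ∧ T.length = 1))
    (hqsupp : ∀ w ∈ q.support, w ≠ x → w ≠ y → w ∉ (S1.append S2).support ∧
        w ∉ (R1.append R2).support ∧ w ∉ T.support)
    (hqedge : ∀ e ∈ q.edges, e ∉ (S1.append S2).edges ∧ e ∉ (R1.append R2).edges ∧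
        e ∉ T.edges) :
    ∃ e ∈ G.edgeSet, (CyclesThrough G e).ncard = 4 := by
  haveI : Finite G.Subgraph := subgraph_finite
  set P1 := S1.append S2 with hP1def
  set P2 := R1.append R2 with hP2def
  have hS1 : S1.IsPath := Walk.IsPath.of_append_left hP1
  have hS2 : S2.IsPath := Walk.IsPath.of_append_right hP1
  have hR1 : R1.IsPath := Walk.IsPath.of_append_left hP2
  have hR2 : R2.IsPath := Walk.IsPath.of_append_right hP2
  have hS1len : 1 ≤ S1.length := one_le_length_of_ne hxu.symm S1
  have hS2len : 1 ≤ S2.length := one_le_length_of_ne hxv S2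
  have hR1len : 1 ≤ R1.length := one_le_length_of_ne hyu.symm R1
  have hR2len : 1 ≤ R2.length := one_le_length_of_ne hyv R2
  have hTlen : 1 ≤ T.length := one_le_length_of_ne huv T
  have hP1len : P1.length = S1.length + S2.length := by
    rw [hP1def, Walk.length_append]
  have hP2len : P2.length = R1.length + R2.length := by
    rw [hP2def, Walk.length_append]
  -- support decompositions
  have hnd1 := hP1.support_nodup
  rw [hP1def, Walk.support_append, List.nodup_append'] at hnd1
  obtain ⟨hndS1, hndS2t, hdisjS⟩ := hnd1
  have hnd2 := hP2.support_nodup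
  rw [hP2def, Walk.support_append, List.nodup_append'] at hnd2
  obtain ⟨hndR1, hndR2t, hdisjR⟩ := hnd2
  have hxS1 : x ∈ S1.support := S1.end_mem_support
  have hyR1 : y ∈ R1.support := R1.end_mem_support
  have fvS1 : v ∉ S1.support := by
    intro h
    exact hdisjS h (end_mem_tail_support hxv S2)
  have fuR2 : u ∉ R2.support.tail := by
    intro h
    exact hdisjR R1.start_mem_support h
  have fS1S2 : ∀ w ∈ S1.support, w ∈ S2.support → w = x := by
    intro w hw hw2
    rw [S2.support_eq_cons, List.mem_cons] at hw2
    rcases hw2 with rfl | hw2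
    · rfl
    · exact absurd hw2 (hdisjS hw)
  have fR1R2 : ∀ w ∈ R1.support, w ∈ R2.support → w = y := by
    intro w hw hw2
    rw [R2.support_eq_cons, List.mem_cons] at hw2
    rcases hw2 with rfl | hw2
    · rfl
    · exact absurd hw2 (hdisjR hw)
  -- memberships
  have hS1P1 : ∀ w ∈ S1.support, w ∈ P1.support := by
    intro w hw; rw [hP1def, Walk.mem_support_append_iff]; exact Or.inl hw
  have hS2P1 : ∀ w ∈ S2.support, w ∈ P1.support := by
    intro w hw; rw [hP1def, Walk.mem_support_append_iff]; exact Or.inr hw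
  have hR1P2 : ∀ w ∈ R1.support, w ∈ P2.support := by
    intro w hw; rw [hP2def, Walk.mem_support_append_iff]; exact Or.inl hw
  have hR2P2 : ∀ w ∈ R2.support, w ∈ P2.support := by
    intro w hw; rw [hP2def, Walk.mem_support_append_iff]; exact Or.inr hw
  have hxP2 : x ∉ P2.support := by
    intro h
    rcases hd12 x (hS1P1 _ hxS1) h with rfl | rfl
    · exact hxu rfl
    · exact hxv rfl
  have hxT : x ∉ T.support := by
    intro h
    rcases hd13 x (hS1P1 _ hxS1) h with rfl | rfl
    · exact hxu rfl
    · exact hxv rfl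
  have hyP1 : y ∉ P1.support := by
    intro h
    rcases hd12 y h (hR1P2 _ hyR1) with rfl | rfl
    · exact hyu rfl
    · exact hyv rfl
  have hyT : y ∉ T.support := by
    intro h
    rcases hd23 y (hR1P2 _ hyR1) h with rfl | rfl
    · exact hyu rfl
    · exact hyv rfl
  -- the path Y = S1 + q from u to y
  have hY : (S1.append q).IsPath := by
    apply isPath_append hS1 hq
    intro w hw1 hwq
    by_cases hwx : w = x
    · exact hwx
    · by_cases hwy : w = y
      · subst hwy; exact absurd (hS1P1 _ hw1) hyP1
      · exact absurd (hS1P1 _ hw1) (hqsupp w hwq hwx hwy).1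
  set Y := S1.append q with hYdef
  have hYlen : Y.length = S1.length + q.length := by rw [hYdef, Walk.length_append]
  have hYsupp : ∀ w ∈ Y.support, w ∈ S1.support ∨ w ∈ q.support := by
    intro w hw
    rw [hYdef, Walk.mem_support_append_iff] at hw
    exact hw
  -- the path Z = Y + R2 from u to v
  have hZ : (Y.append R2).IsPath := by
    apply isPath_append hY hR2
    intro w hw hw2
    rcases hYsupp w hw with hw1 | hwq
    · rcases hd12 w (hS1P1 _ hw1) (hR2P2 _ hw2) with rfl | rfl
      · rw [R2.support_eq_cons, List.mem_cons] at hw2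
        rcases hw2 with h | h
        · exact absurd h.symm hyu
        · exact absurd h fuR2
      · exact absurd hw1 fvS1
    · by_cases hwx : w = x
      · subst hwx; exact absurd (hR2P2 _ hw2) hxP2
      · by_cases hwy : w = y
        · exact hwy
        · exact absurd (hR2P2 _ hw2) (hqsupp w hwq hwx hwy).2.1
  set Z := Y.append R2 with hZdef
  have hZlen : Z.length = Y.length + R2.length := by rw [hZdef, Walk.length_append]
  have hZsupp : ∀ w ∈ Z.support, (w ∈ S1.support ∨ w ∈ q.support) ∨ w ∈ R2.support := by
    intro w hw
    rw [hZdef, Walk.mem_support_append_iff] at hw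
    rcases hw with hw | hw
    · exact Or.inl (hYsupp w hw)
    · exact Or.inr hw
  -- the four cycles
  have hrevT : ∀ w ∈ T.reverse.support, w ∈ T.support := by
    intro w hw; rwa [Walk.support_reverse, List.mem_reverse] at hw
  have hrev2 : ∀ w ∈ P2.reverse.support, w ∈ P2.support := by
    intro w hw; rwa [Walk.support_reverse, List.mem_reverse] at hw
  have hrevR1 : ∀ w ∈ R1.reverse.support, w ∈ R1.support := by
    intro w hw; rwa [Walk.support_reverse, List.mem_reverse] at hw
  have cyc1 : (P1.append T.reverse).IsCycle := by
    apply isCycle_append huv hP1 hT.reverse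
    · rw [Walk.length_reverse]; omega
    · intro w hw hw2; exact hd13 w hw (hrevT w hw2)
  have cyc4 : (P1.append P2.reverse).IsCycle := by
    apply isCycle_append huv hP1 hP2.reverse
    · rw [Walk.length_reverse]; omega
    · intro w hw hw2; exact hd12 w hw (hrev2 w hw2)
  have cyc2 : (Y.append R1.reverse).IsCycle := by
    apply isCycle_append hyu.symm hY hR1.reverse
    · rw [Walk.length_reverse]; omega
    · intro w hw hw2
      have hw2' := hrevR1 w hw2
      rcases hYsupp w hw with hw1 | hwq
      · rcases hd12 w (hS1P1 _ hw1) (hR1P2 _ hw2') with rfl | rfl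
        · exact Or.inl rfl
        · exact absurd hw1 fvS1
      · by_cases hwx : w = x
        · subst hwx; exact absurd (hR1P2 _ hw2') hxP2
        · by_cases hwy : w = y
          · exact Or.inr hwy
          · exact absurd (hR1P2 _ hw2') (hqsupp w hwq hwx hwy).2.1
  have cyc3 : (Z.append T.reverse).IsCycle := by
    apply isCycle_append huv hZ hT.reverse
    · rw [Walk.length_reverse]; omega
    · intro w hw hw2
      have hw2' := hrevT w hw2
      rcases hZsupp w hw with (hw1 | hwq) | hwr
      · exact hd13 w (hS1P1 _ hw1) hw2'
      · by_cases hwx : w = x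
        · subst hwx; exact absurd hw2' hxT
        · by_cases hwy : w = y
          · subst hwy; exact absurd hw2' hyT
          · exact absurd hw2' (hqsupp w hwq hwx hwy).2.2
      · exact hd23 w (hR2P2 _ hwr) hw2'
  -- edge relations
  have hedge12 : ∀ e ∈ P1.edges, e ∉ P2.edges := by
    intro e he1 he2
    induction e with
    | h c d =>
      have hc : c = u ∨ c = v := hd12 c (Walk.fst_mem_support_of_mem_edges _ he1)
        (Walk.fst_mem_support_of_mem_edges _ he2)
      have hd' : d = u ∨ d = v := hd12 d (Walk.snd_mem_support_of_mem_edges _ he1)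
        (Walk.snd_mem_support_of_mem_edges _ he2)
      have hcd : c ≠ d := (P1.adj_of_mem_edges he1).ne
      have he : s(c, d) = s(u, v) := by
        rcases hc with rfl | rfl <;> rcases hd' with rfl | rfl
        · exact absurd rfl hcd
        · rfl
        · exact Sym2.eq_swap
        · exact absurd rfl hcd
      rw [he] at he1
      have := length_eq_one_of_mem_edges hP1 he1
      omega
  have hedge13 : ∀ e ∈ P1.edges, e ∉ T.edges := by
    intro e he1 he2
    induction e with
    | h c d =>
      have hc : c = u ∨ c = v := hd13 c (Walk.fst_mem_support_of_mem_edges _ he1)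
        (Walk.fst_mem_support_of_mem_edges _ he2)
      have hd' : d = u ∨ d = v := hd13 d (Walk.snd_mem_support_of_mem_edges _ he1)
        (Walk.snd_mem_support_of_mem_edges _ he2)
      have hcd : c ≠ d := (P1.adj_of_mem_edges he1).ne
      have he : s(c, d) = s(u, v) := by
        rcases hc with rfl | rfl <;> rcases hd' with rfl | rfl
        · exact absurd rfl hcd
        · rfl
        · exact Sym2.eq_swap
        · exact absurd rfl hcd
      rw [he] at he1
      have := length_eq_one_of_mem_edges hP1 he1
      omega
  have hedge23 : ∀ e ∈ P2.edges, e ∉ T.edges := by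
    intro e he1 he2
    induction e with
    | h c d =>
      have hc : c = u ∨ c = v := hd23 c (Walk.fst_mem_support_of_mem_edges _ he1)
        (Walk.fst_mem_support_of_mem_edges _ he2)
      have hd' : d = u ∨ d = v := hd23 d (Walk.snd_mem_support_of_mem_edges _ he1)
        (Walk.snd_mem_support_of_mem_edges _ he2)
      have hcd : c ≠ d := (P2.adj_of_mem_edges he1).ne
      have he : s(c, d) = s(u, v) := by
        rcases hc with rfl | rfl <;> rcases hd' with rfl | rfl
        · exact absurd rfl hcd
        · rfl
        · exact Sym2.eq_swap
        · exact absurd rfl hcd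
      rw [he] at he1 he2
      exact h2Tlen ⟨length_eq_one_of_mem_edges hP2 he1,
        length_eq_one_of_mem_edges hT he2⟩
  have hP1edges : P1.edges = S1.edges ++ S2.edges := by
    rw [hP1def, Walk.edges_append]
  have hP2edges : P2.edges = R1.edges ++ R2.edges := by
    rw [hP2def, Walk.edges_append]
  have hYedges : Y.edges = S1.edges ++ q.edges := by
    rw [hYdef, Walk.edges_append]
  have hZedges : Z.edges = (S1.edges ++ q.edges) ++ R2.edges := by
    rw [hZdef, Walk.edges_append, hYedges]
  -- distinguished edges
  obtain ⟨e0, he0⟩ := exists_edge (w := S1) hS1len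
  have he0G : e0 ∈ G.edgeSet := S1.edges_subset_edgeSet he0
  have he0P1 : e0 ∈ P1.edges := by rw [hP1edges]; exact List.mem_append_left _ he0
  have he0Y : e0 ∈ Y.edges := by rw [hYedges]; exact List.mem_append_left _ he0
  have he0Z : e0 ∈ Z.edges := by
    rw [hZedges]; exact List.mem_append_left _ (List.mem_append_left _ he0)
  obtain ⟨eq0, heq0⟩ := exists_edge (w := q) hq1
  obtain ⟨eT, heT⟩ := exists_edge (w := T) hTlen
  -- the four cycle subgraphs contain e0
  have mem1 : (P1.append T.reverse).toSubgraph ∈ CyclesThrough G e0 := by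
    refine ⟨⟨u, _, cyc1, rfl⟩, ?_⟩
    rw [Walk.edgeSet_toSubgraph]
    show e0 ∈ (P1.append T.reverse).edges
    rw [Walk.edges_append]
    exact List.mem_append_left _ he0P1
  have mem2 : (Y.append R1.reverse).toSubgraph ∈ CyclesThrough G e0 := by
    refine ⟨⟨u, _, cyc2, rfl⟩, ?_⟩
    rw [Walk.edgeSet_toSubgraph]
    show e0 ∈ (Y.append R1.reverse).edges
    rw [Walk.edges_append]
    exact List.mem_append_left _ he0Y
  have mem3 : (Z.append T.reverse).toSubgraph ∈ CyclesThrough G e0 := by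
    refine ⟨⟨u, _, cyc3, rfl⟩, ?_⟩
    rw [Walk.edgeSet_toSubgraph]
    show e0 ∈ (Z.append T.reverse).edges
    rw [Walk.edges_append]
    exact List.mem_append_left _ he0Z
  have mem4 : (P1.append P2.reverse).toSubgraph ∈ CyclesThrough G e0 := by
    refine ⟨⟨u, _, cyc4, rfl⟩, ?_⟩
    rw [Walk.edgeSet_toSubgraph]
    show e0 ∈ (P1.append P2.reverse).edges
    rw [Walk.edges_append]
    exact List.mem_append_left _ he0P1
  -- distinctness
  have heq0n1 : eq0 ∉ (P1.append T.reverse).edges := by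
    rw [Walk.edges_append, List.mem_append]
    rintro (h | h)
    · exact (hqedge eq0 heq0).1 h
    · rw [Walk.edges_reverse, List.mem_reverse] at h
      exact (hqedge eq0 heq0).2.2 h
  have heq0n4 : eq0 ∉ (P1.append P2.reverse).edges := by
    rw [Walk.edges_append, List.mem_append]
    rintro (h | h)
    · exact (hqedge eq0 heq0).1 h
    · rw [Walk.edges_reverse, List.mem_reverse] at h
      exact (hqedge eq0 heq0).2.1 h
  have heq0in2 : eq0 ∈ (Y.append R1.reverse).edges := by
    rw [Walk.edges_append, List.mem_append, hYedges, List.mem_append]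
    exact Or.inl (Or.inr heq0)
  have heq0in3 : eq0 ∈ (Z.append T.reverse).edges := by
    rw [Walk.edges_append, List.mem_append, hZedges, List.mem_append, List.mem_append]
    exact Or.inl (Or.inl (Or.inr heq0))
  have heTn2 : eT ∉ (Y.append R1.reverse).edges := by
    rw [Walk.edges_append, List.mem_append, hYedges, List.mem_append]
    rintro ((h | h) | h)
    · exact hedge13 eT (by rw [hP1edges]; exact List.mem_append_left _ h) heT
    · exact (hqedge eT h).2.2 heT
    · rw [Walk.edges_reverse, List.mem_reverse] at h
      exact hedge23 eT (by rw [hP2edges]; exact List.mem_append_left _ h) heT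
  have heTn4 : eT ∉ (P1.append P2.reverse).edges := by
    rw [Walk.edges_append, List.mem_append]
    rintro (h | h)
    · exact hedge13 eT h heT
    · rw [Walk.edges_reverse, List.mem_reverse] at h
      exact hedge23 eT h heT
  have heTin1 : eT ∈ (P1.append T.reverse).edges := by
    rw [Walk.edges_append, List.mem_append, Walk.edges_reverse, List.mem_reverse]
    exact Or.inr heT
  have heTin3 : eT ∈ (Z.append T.reverse).edges := by
    rw [Walk.edges_append, List.mem_append, Walk.edges_reverse, List.mem_reverse]
    exact Or.inr heT
  have d12 : (P1.append T.reverse).toSubgraph ≠ (Y.append R1.reverse).toSubgraph :=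
    fun h => (toSubgraph_ne_of_edge eq0 heq0in2 heq0n1) h.symm
  have d13 : (P1.append T.reverse).toSubgraph ≠ (Z.append T.reverse).toSubgraph :=
    fun h => (toSubgraph_ne_of_edge eq0 heq0in3 heq0n1) h.symm
  have d14 : (P1.append T.reverse).toSubgraph ≠ (P1.append P2.reverse).toSubgraph :=
    toSubgraph_ne_of_edge eT heTin1 heTn4
  have d23 : (Y.append R1.reverse).toSubgraph ≠ (Z.append T.reverse).toSubgraph :=
    fun h => (toSubgraph_ne_of_edge eT heTin3 heTn2) h.symm
  have d24 : (Y.append R1.reverse).toSubgraph ≠ (P1.append P2.reverse).toSubgraph :=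
    fun h => (toSubgraph_ne_of_edge eq0 heq0in2 heq0n4) h
  have d34 : (Z.append T.reverse).toSubgraph ≠ (P1.append P2.reverse).toSubgraph :=
    fun h => (toSubgraph_ne_of_edge eq0 heq0in3 heq0n4) h
  exact ⟨e0, he0G, ncard_eq_four (Set.toFinite _) (hbound e0 he0G)
    mem1 mem2 mem3 mem4 d12 d13 d14 d23 d24 d34⟩

end Case1

end ThetaAux

/-- Every `θ₃'`-graph is a nice 4-cactus: every edge lies in at most 4 cycles
and some edge lies in exactly 4 cycles. -/
theorem thetaPrime_nice_four_cactus (G : SimpleGraph V)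
    (hG : IsThetaPrimeGraph G) :
    IsKCactus G 4 ∧ ∃ e ∈ G.edgeSet, (CyclesThrough G e).ncard = 4 := by
  classical
  obtain ⟨A, Q, u, v, a, b, ⟨huv, p, hpath, hlen1, hdisj, hsing, hA⟩,
    ⟨haA, hbA, q, hq, hq1, hQ, hqint, hqedge⟩, hau, hav, hbu, hbv, hAQ⟩ := hG
  have hAverts : A.verts = ⋃ i, {w | w ∈ (p i).support} := by
    rw [← hA, Subgraph.verts_iSup]
    simp only [Walk.verts_toSubgraph]
  have hQverts : Q.verts = {w | w ∈ q.support} := by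
    rw [← hQ, Walk.verts_toSubgraph]
  have huniv : (Set.univ : Set V) = A.verts ∪ Q.verts := by
    rw [← Subgraph.verts_sup, hAQ, Subgraph.verts_top]
  have hVfin : Finite V := by
    rw [← Set.finite_univ_iff]
    rw [huniv, hAverts, hQverts, ThetaAux.iUnion_fin3]
    exact (((((p 0).support.finite_toSet.union
      ((p 1).support.finite_toSet)).union
      ((p 2).support.finite_toSet)).union (q.support.finite_toSet)))
  haveI := hVfin
  haveI : Fintype V := Fintype.ofFinite V
  -- connectivity
  have hmemA : ∀ x ∈ A.verts, G.Reachable u x := by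
    intro x hx
    rw [hAverts] at hx
    obtain ⟨S, ⟨i, rfl⟩, hxS⟩ := hx
    exact ThetaAux.reachable_of_mem_support (p i) hxS
  have hreach : ∀ x : V, G.Reachable u x := by
    intro x
    have : x ∈ A.verts ∪ Q.verts := by rw [← huniv]; trivial
    rcases this with hx | hx
    · exact hmemA x hx
    · rw [hQverts] at hx
      exact (hmemA a haA).trans (ThetaAux.reachable_of_mem_support q hx)
  have hconn : G.Connected := by
    rw [SimpleGraph.connected_iff]
    exact ⟨fun x y => (hreach x).symm.trans (hreach y), ⟨u⟩⟩
  -- the edge/vertex count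
  have hab : a ≠ b := ThetaAux.ends_ne_of_isPath hq hq1
  have hmn : Fintype.card G.edgeSet ≤ Fintype.card V + 2 := by
    have hGE : G.edgeSet = ({e | e ∈ (p 0).edges} ∪ {e | e ∈ (p 1).edges}
        ∪ {e | e ∈ (p 2).edges}) ∪ {e | e ∈ q.edges} := by
      rw [← Subgraph.edgeSet_top, ← hAQ, Subgraph.edgeSet_sup, ← hA, ← hQ,
        Subgraph.edgeSet_iSup]
      simp only [Walk.edgeSet_toSubgraph]
      rw [ThetaAux.iUnion_fin3]
      rfl
    have hmle : (G.edgeSet).ncard ≤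
        (p 0).length + (p 1).length + (p 2).length + q.length := by
      rw [hGE]
      calc (({e | e ∈ (p 0).edges} ∪ {e | e ∈ (p 1).edges} ∪ {e | e ∈ (p 2).edges})
            ∪ {e | e ∈ q.edges}).ncard
          ≤ (({e | e ∈ (p 0).edges} ∪ {e | e ∈ (p 1).edges})
              ∪ {e | e ∈ (p 2).edges}).ncard + {e | e ∈ q.edges}.ncard :=
            Set.ncard_union_le _ _
        _ ≤ (({e | e ∈ (p 0).edges} ∪ {e | e ∈ (p 1).edges}).ncard
              + {e | e ∈ (p 2).edges}.ncard) + {e | e ∈ q.edges}.ncard := by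
            have := Set.ncard_union_le ({e | e ∈ (p 0).edges} ∪ {e | e ∈ (p 1).edges})
              {e | e ∈ (p 2).edges}
            omega
        _ ≤ (({e | e ∈ (p 0).edges}.ncard + {e | e ∈ (p 1).edges}.ncard)
              + {e | e ∈ (p 2).edges}.ncard) + {e | e ∈ q.edges}.ncard := by
            have := Set.ncard_union_le {e | e ∈ (p 0).edges} {e | e ∈ (p 1).edges}
            omega
        _ ≤ (p 0).length + (p 1).length + (p 2).length + q.length := by
            have h0 := ThetaAux.ncard_list_le (p 0).edges
            have h1 := ThetaAux.ncard_list_le (p 1).edges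
            have h2 := ThetaAux.ncard_list_le (p 2).edges
            have h3 := ThetaAux.ncard_list_le q.edges
            rw [Walk.length_edges] at h0 h1 h2 h3
            omega
    -- vertex lower bound
    set D : Fin 3 → Set V := fun i => {w | w ∈ (p i).support} \ {u, v} with hD
    set Dq : Set V := {w | w ∈ q.support} \ {a, b} with hDq
    have hsubA : ∀ i, ∀ x ∈ (p i).support, x ∈ A.verts := by
      intro i x hx
      rw [hAverts]
      exact ⟨_, ⟨i, rfl⟩, hx⟩
    have hDcard : ∀ i, (D i).ncard = ((p i).length + 1) - 2 := by
      intro i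
      rw [hD]
      have hsub : ({u, v} : Set V) ⊆ {w | w ∈ (p i).support} := by
        rintro x (rfl | rfl)
        · exact (p i).start_mem_support
        · exact (p i).end_mem_support
      rw [Set.ncard_diff hsub]
      rw [ThetaAux.ncard_list_eq (hpath i).support_nodup, Walk.length_support,
        Set.ncard_pair huv]
    have hDqcard : Dq.ncard = (q.length + 1) - 2 := by
      rw [hDq]
      have hsub : ({a, b} : Set V) ⊆ {w | w ∈ q.support} := by
        rintro x (rfl | rfl)
        · exact q.start_mem_support
        · exact q.end_mem_support
      rw [Set.ncard_diff hsub]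
      rw [ThetaAux.ncard_list_eq hq.support_nodup, Walk.length_support,
        Set.ncard_pair hab]
    have hDdisj : ∀ i j, i ≠ j → Disjoint (D i) (D j) := by
      intro i j hij
      rw [Set.disjoint_left]
      rintro x ⟨hxi, hxuv⟩ ⟨hxj, -⟩
      rcases hdisj i j hij x hxi hxj with rfl | rfl
      · exact hxuv (Or.inl rfl)
      · exact hxuv (Or.inr rfl)
    have hDqdisj : ∀ i, Disjoint (D i) Dq := by
      intro i
      rw [Set.disjoint_left]
      rintro x ⟨hxi, -⟩ ⟨hxq, hxab⟩
      refine hqint x hxq (fun h => hxab (Or.inl h)) (fun h => hxab (Or.inr h)) ?_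
      exact hsubA i x hxi
    have hUdisj : ∀ i, Disjoint (D i) ({u, v} : Set V) := by
      intro i
      rw [Set.disjoint_left]
      rintro x ⟨-, hxuv⟩ h
      exact hxuv h
    have hUqdisj : Disjoint Dq ({u, v} : Set V) := by
      rw [Set.disjoint_left]
      rintro x ⟨hxq, hxab⟩ h
      refine hqint x hxq (fun h' => hxab (Or.inl h')) (fun h' => hxab (Or.inr h')) ?_
      rcases h with rfl | rfl
      · rw [hAverts]; exact ⟨_, ⟨0, rfl⟩, (p 0).start_mem_support⟩
      · rw [hAverts]; exact ⟨_, ⟨0, rfl⟩, (p 0).end_mem_support⟩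
    have hncard_univ : (Set.univ : Set V).ncard = Fintype.card V := by
      rw [Set.ncard_univ, Nat.card_eq_fintype_card]
    have hunion_card : (D 0).ncard + (D 1).ncard + (D 2).ncard + Dq.ncard + 2
        ≤ Fintype.card V := by
      have h2 : (({u, v} : Set V)).ncard = 2 := Set.ncard_pair huv
      have hsubuniv : (D 0 ∪ D 1 ∪ D 2 ∪ Dq ∪ {u, v}) ⊆ Set.univ := Set.subset_univ _
      have hc1 : (D 0 ∪ D 1).ncard = (D 0).ncard + (D 1).ncard :=
        Set.ncard_union_eq (hDdisj 0 1 (by decide)) (Set.toFinite _) (Set.toFinite _)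
      have hc2 : (D 0 ∪ D 1 ∪ D 2).ncard = (D 0 ∪ D 1).ncard + (D 2).ncard := by
        refine Set.ncard_union_eq ?_ (Set.toFinite _) (Set.toFinite _)
        rw [Set.disjoint_union_left]
        exact ⟨hDdisj 0 2 (by decide), hDdisj 1 2 (by decide)⟩
      have hc3 : (D 0 ∪ D 1 ∪ D 2 ∪ Dq).ncard = (D 0 ∪ D 1 ∪ D 2).ncard + Dq.ncard := by
        refine Set.ncard_union_eq ?_ (Set.toFinite _) (Set.toFinite _)
        rw [Set.disjoint_union_left, Set.disjoint_union_left]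
        exact ⟨⟨hDqdisj 0, hDqdisj 1⟩, hDqdisj 2⟩
      have hc4 : (D 0 ∪ D 1 ∪ D 2 ∪ Dq ∪ {u, v}).ncard
          = (D 0 ∪ D 1 ∪ D 2 ∪ Dq).ncard + ({u, v} : Set V).ncard := by
        refine Set.ncard_union_eq ?_ (Set.toFinite _) (Set.toFinite _)
        rw [Set.disjoint_union_left, Set.disjoint_union_left, Set.disjoint_union_left]
        exact ⟨⟨⟨hUdisj 0, hUdisj 1⟩, hUdisj 2⟩, hUqdisj⟩
      have := Set.ncard_le_ncard hsubuniv (Set.toFinite _)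
      rw [hncard_univ] at this
      omega
    have hcardE : Fintype.card G.edgeSet = (G.edgeSet).ncard := by
      rw [← Nat.card_eq_fintype_card, Nat.card_coe_set_eq]
    have hl0 := hlen1 0
    have hl1 := hlen1 1
    have hl2 := hlen1 2
    have hD0 := hDcard 0
    have hD1 := hDcard 1
    have hD2 := hDcard 2
    omega
  have hbound := ThetaAux.cycles_bound hconn.preconnected u hmn
  refine ⟨⟨hconn, hbound⟩, ?_⟩
  -- Part C: some edge lies on exactly four cycles
  have hsubA : ∀ i : Fin 3, ∀ x ∈ (p i).support, x ∈ A.verts := by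
    intro i x hx
    rw [hAverts]
    exact ⟨_, ⟨i, rfl⟩, hx⟩
  have hsubEdge : ∀ i : Fin 3, ∀ e ∈ (p i).edges, e ∈ A.edgeSet := by
    intro i e he
    have hle : (p i).toSubgraph ≤ A := hA ▸ le_iSup (fun i => (p i).toSubgraph) i
    apply Subgraph.edgeSet_mono hle
    rw [Walk.edgeSet_toSubgraph]
    exact he
  have hqs : ∀ w ∈ q.support, w ≠ a → w ≠ b → ∀ i : Fin 3, w ∉ (p i).support :=
    fun w hw h1 h2 i hc => hqint w hw h1 h2 (hsubA i _ hc)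
  have hqe : ∀ e ∈ q.edges, ∀ i : Fin 3, e ∉ (p i).edges :=
    fun e he i hc => hqedge e he (hsubEdge i _ hc)
  obtain ⟨i0, ha0⟩ : ∃ i, a ∈ (p i).support := by
    rw [hAverts] at haA
    obtain ⟨S, ⟨i, rfl⟩, h⟩ := haA
    exact ⟨i, h⟩
  obtain ⟨j0, hb0⟩ : ∃ i, b ∈ (p i).support := by
    rw [hAverts] at hbA
    obtain ⟨S, ⟨i, rfl⟩, h⟩ := hbA
    exact ⟨i, h⟩
  by_cases hbi : b ∈ (p i0).support
  · -- the ear has both ends on the path `p i0`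
    obtain ⟨j, k, hji, hki, hjk⟩ : ∃ j k : Fin 3, j ≠ i0 ∧ k ≠ i0 ∧ j ≠ k := by
      have hex : ∀ i : Fin 3, ∃ j k : Fin 3, j ≠ i ∧ k ≠ i ∧ j ≠ k := by decide
      exact hex i0
    have h23len : ¬((p j).length = 1 ∧ (p k).length = 1) := by
      rintro ⟨h1, h2⟩
      exact hjk (hsing h1 h2)
    by_cases hba : b ∈ ((p i0).dropUntil a ha0).support
    · set S1 := (p i0).takeUntil a ha0 with hS1def
      set W := (p i0).dropUntil a ha0 with hWdef
      set S2 := W.takeUntil b hba with hS2def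
      set S3 := W.dropUntil b hba with hS3def
      have h1 : S2.append S3 = W := W.take_spec hba
      have happ : S1.append (S2.append S3) = p i0 := by
        rw [h1]; exact (p i0).take_spec ha0
      refine ThetaAux.case2 hbound huv hau hav hbu hbv hab S1 S2 S3
        (P2 := p j) (P3 := p k) (q := q)
        (by rw [happ]; exact hpath i0) (hpath j) (hpath k) hq hq1
        ?_ ?_ (hdisj j k hjk) h23len ?_ ?_
      · rw [happ]; exact hdisj i0 j (Ne.symm hji)
      · rw [happ]; exact hdisj i0 k (Ne.symm hki)
      · intro w hw h1' h2'
        exact ⟨by rw [happ]; exact hqs w hw h1' h2' i0,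
          hqs w hw h1' h2' j, hqs w hw h1' h2' k⟩
      · intro e he
        exact ⟨by rw [happ]; exact hqe e he i0, hqe e he j, hqe e he k⟩
    · have hbt : b ∈ ((p i0).takeUntil a ha0).support := by
        have h := hbi
        rw [← (p i0).take_spec ha0, Walk.mem_support_append_iff] at h
        rcases h with h | h
        · exact h
        · exact absurd h hba
      set W := (p i0).takeUntil a ha0 with hWdef
      set S1 := W.takeUntil b hbt with hS1def
      set S2 := W.dropUntil b hbt with hS2def
      set S3 := (p i0).dropUntil a ha0 with hS3def
      have happ : S1.append (S2.append S3) = p i0 := by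
        rw [Walk.append_assoc, W.take_spec hbt]
        exact (p i0).take_spec ha0
      refine ThetaAux.case2 hbound huv hbu hbv hau hav hab.symm S1 S2 S3
        (P2 := p j) (P3 := p k) (q := q.reverse)
        (by rw [happ]; exact hpath i0) (hpath j) (hpath k) hq.reverse
        (by rw [Walk.length_reverse]; exact hq1)
        ?_ ?_ (hdisj j k hjk) h23len ?_ ?_
      · rw [happ]; exact hdisj i0 j (Ne.symm hji)
      · rw [happ]; exact hdisj i0 k (Ne.symm hki)
      · intro w hw h1' h2'
        rw [Walk.support_reverse, List.mem_reverse] at hw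
        exact ⟨by rw [happ]; exact hqs w hw h2' h1' i0,
          hqs w hw h2' h1' j, hqs w hw h2' h1' k⟩
      · intro e he
        rw [Walk.edges_reverse, List.mem_reverse] at he
        exact ⟨by rw [happ]; exact hqe e he i0, hqe e he j, hqe e he k⟩
  · -- the ends of the ear lie on two distinct paths
    have hji : j0 ≠ i0 := by
      rintro rfl
      exact hbi hb0
    obtain ⟨k0, hk0i, hk0j⟩ : ∃ k : Fin 3, k ≠ i0 ∧ k ≠ j0 := by
      have : ∀ i j : Fin 3, i ≠ j → ∃ k, k ≠ i ∧ k ≠ j := by decide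
      exact this i0 j0 (Ne.symm hji)
    have h2Tlen : ¬((p j0).length = 1 ∧ (p k0).length = 1) := by
      rintro ⟨h1, h2⟩
      exact hk0j (hsing h2 h1)
    set S1 := (p i0).takeUntil a ha0 with hS1def
    set S2 := (p i0).dropUntil a ha0 with hS2def
    set R1 := (p j0).takeUntil b hb0 with hR1def
    set R2 := (p j0).dropUntil b hb0 with hR2def
    have happ1 : S1.append S2 = p i0 := (p i0).take_spec ha0
    have happ2 : R1.append R2 = p j0 := (p j0).take_spec hb0
    have h2T : ¬((R1.append R2).length = 1 ∧ (p k0).length = 1) := by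
      rw [happ2]; exact h2Tlen
    refine ThetaAux.case1 hbound huv hau hav hbu hbv S1 S2 R1 R2
      (T := p k0) (q := q)
      (by rw [happ1]; exact hpath i0) (by rw [happ2]; exact hpath j0)
      (hpath k0) hq hq1 ?_ ?_ ?_ h2T ?_ ?_
    · rw [happ1, happ2]; exact hdisj i0 j0 (Ne.symm hji)
    · rw [happ1]; exact hdisj i0 k0 (Ne.symm hk0i)
    · rw [happ2]; exact hdisj j0 k0 (Ne.symm hk0j)
    · intro w hw h1' h2'
      exact ⟨by rw [happ1]; exact hqs w hw h1' h2' i0,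
        by rw [happ2]; exact hqs w hw h1' h2' j0, hqs w hw h1' h2' k0⟩
    · intro e he
      exact ⟨by rw [happ1]; exact hqe e he i0,
        by rw [happ2]; exact hqe e he j0, hqe e he k0⟩
end

section
/- Let G be a 2-connected k-cactus (k ≥ 1) with ear decomposition [Q_0, Q_1, ..., Q_l], where Q_0 is a cycle. Then l ≤ k - 1. -/
open SimpleGraph

variable {V : Type}

section EarProofAux

variable {G : SimpleGraph V}

open SimpleGraph Walk

private lemma myPath_append {a b c : V} {p : G.Walk a b} {q : G.Walk b c}
    (hp : p.IsPath) (hq : q.IsPath)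
    (h : ∀ w ∈ p.support, w ∈ q.support → w = b) :
    (p.append q).IsPath := by
  apply Walk.IsPath.mk'
  rw [Walk.support_append]
  refine List.Nodup.append hp.support_nodup
    (hq.support_nodup.sublist (List.tail_sublist _)) ?_
  intro w hw hw'
  have hwb := h w hw (List.mem_of_mem_tail hw')
  subst hwb
  have hnd := hq.support_nodup
  rw [q.support_eq_cons] at hnd
  exact (List.nodup_cons.mp hnd).1 hw'

variable [DecidableEq V]

private lemma supp_split {a b x : V} (p : G.Walk a b) (hx : x ∈ p.support) :
    p.support = (p.takeUntil x hx).support ++ (p.dropUntil x hx).support.tail := by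
  conv_lhs => rw [← p.take_spec hx]
  exact Walk.support_append _ _

private lemma take_drop_inter {a b x : V} {p : G.Walk a b} (hp : p.IsPath)
    (hx : x ∈ p.support) :
    ∀ w, w ∈ (p.takeUntil x hx).support → w ∈ (p.dropUntil x hx).support → w = x := by
  intro w hw1 hw2
  rw [(p.dropUntil x hx).support_eq_cons] at hw2
  rcases List.mem_cons.mp hw2 with h | h
  · exact h
  · have hnd := hp.support_nodup
    rw [supp_split p hx] at hnd
    exact absurd h ((List.nodup_append'.mp hnd).2.2 hw1)

private lemma end_not_mem_take {a b x : V} {p : G.Walk a b} (hp : p.IsPath)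
    (hx : x ∈ p.support) (hxb : x ≠ b) : b ∉ (p.takeUntil x hx).support := by
  intro hb
  exact hxb ((take_drop_inter hp hx b hb ((p.dropUntil x hx).end_mem_support)).symm)

private lemma start_not_mem_drop {a b x : V} {p : G.Walk a b} (hp : p.IsPath)
    (hx : x ∈ p.support) (hxa : x ≠ a) : a ∉ (p.dropUntil x hx).support := by
  intro ha
  exact hxa ((take_drop_inter hp hx a ((p.takeUntil x hx).start_mem_support) ha).symm)

private lemma toSubgraph_take_drop_le {a b x : V} (p : G.Walk a b) (hx : x ∈ p.support) :
    (p.takeUntil x hx).toSubgraph ≤ p.toSubgraph ∧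
      (p.dropUntil x hx).toSubgraph ≤ p.toSubgraph := by
  have h : (p.takeUntil x hx).toSubgraph ⊔ (p.dropUntil x hx).toSubgraph = p.toSubgraph := by
    rw [← Walk.toSubgraph_append, p.take_spec hx]
  exact ⟨le_of_le_of_eq le_sup_left h, le_of_le_of_eq le_sup_right h⟩

private lemma glue3 {F : G.Subgraph} {x y c d : V}
    {sx : G.Walk x c} {sy : G.Walk y d} {mid : G.Walk c d}
    (hsx : sx.IsPath) (hsy : sy.IsPath) (hmid : mid.IsPath)
    (hsxF : ∀ w ∈ sx.support, w ∈ F.verts → w = c)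
    (_hsyF : ∀ w ∈ sy.support, w ∈ F.verts → w = d)
    (hmidF : ∀ w ∈ mid.support, w ∈ F.verts)
    (hdisj : ∀ w ∈ sx.support, w ∉ sy.support) :
    (sx.append (mid.append sy.reverse)).IsPath := by
  have hinner : (mid.append sy.reverse).IsPath := by
    apply myPath_append hmid hsy.reverse
    intro w hw hw'
    rw [Walk.support_reverse, List.mem_reverse] at hw'
    exact _hsyF w hw' (hmidF w hw)
  apply myPath_append hsx hinner
  intro w hw hw'
  rw [Walk.support_append] at hw'
  rcases List.mem_append.mp hw' with h | h
  · exact hsxF w hw (hmidF w h)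
  · exfalso
    have : w ∈ sy.support := by
      have := List.mem_of_mem_tail h
      rwa [Walk.support_reverse, List.mem_reverse] at this
    exact hdisj w hw this

private def GoodIn (F : G.Subgraph) (e : Sym2 V) : Prop :=
  ∀ x y : V, x ∈ F.verts → y ∈ F.verts → x ≠ y →
    ∃ p : G.Walk x y, p.IsPath ∧ p.toSubgraph ≤ F ∧ e ∈ p.edges

private lemma mem_support_tail_of_closed {v y : V} (w : G.Walk v v) (hnil : w ≠ .nil)
    (hy : y ∈ w.support) : y ∈ w.support.tail := by
  cases w with
  | nil => exact absurd rfl hnil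
  | cons h q =>
    rw [Walk.support_cons] at hy ⊢
    rw [List.tail_cons]
    rcases List.mem_cons.mp hy with h' | h'
    · subst h'; exact q.end_mem_support
    · exact h'

private lemma cycle_split {x y : V} {c : G.Walk x x} (hc : c.IsCycle) (hy : y ∈ c.support)
    (hxy : y ≠ x) : (c.takeUntil y hy).IsPath ∧ (c.dropUntil y hy).IsPath := by
  have h1 := supp_split c hy
  rw [c.support_eq_cons, (c.takeUntil y hy).support_eq_cons, List.cons_append] at h1
  have htail : c.support.tail =
      (c.takeUntil y hy).support.tail ++ (c.dropUntil y hy).support.tail := by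
    simpa using congrArg List.tail h1
  have hnd := hc.support_nodup
  rw [htail] at hnd
  obtain ⟨hnt, hndd, hdisj⟩ := List.nodup_append'.mp hnd
  have hxmem : x ∉ (c.takeUntil y hy).support.tail := by
    intro hxm
    have hx2 : x ∈ (c.dropUntil y hy).support.tail := by
      have := (c.dropUntil y hy).end_mem_support
      rw [(c.dropUntil y hy).support_eq_cons] at this
      rcases List.mem_cons.mp this with h | h
      · exact absurd h.symm hxy
      · exact h
    exact hdisj hxm hx2
  have hymem : y ∉ (c.dropUntil y hy).support.tail := by
    intro hym
    have hy2 : y ∈ (c.takeUntil y hy).support.tail := by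
      have := (c.takeUntil y hy).end_mem_support
      rw [(c.takeUntil y hy).support_eq_cons] at this
      rcases List.mem_cons.mp this with h | h
      · exact absurd h hxy
      · exact h
    exact hdisj hy2 hym
  constructor
  · apply Walk.IsPath.mk'
    rw [(c.takeUntil y hy).support_eq_cons]
    exact List.nodup_cons.mpr ⟨hxmem, hnt⟩
  · apply Walk.IsPath.mk'
    rw [(c.dropUntil y hy).support_eq_cons]
    exact List.nodup_cons.mpr ⟨hymem, hndd⟩

private lemma goodIn_of_cycle {v : V} {w : G.Walk v v} (hw : w.IsCycle) {e : Sym2 V}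
    (he : e ∈ w.edges) : GoodIn w.toSubgraph e := by
  intro x y hx hy hxy
  rw [Walk.mem_verts_toSubgraph] at hx hy
  have hc : (w.rotate x hx).IsCycle := hw.rotate hx
  have hce : e ∈ (w.rotate x hx).edges := ((w.rotate_edges x hx).mem_iff).mpr he
  have hsub : (w.rotate x hx).toSubgraph = w.toSubgraph := w.toSubgraph_rotate hx
  have hyt : y ∈ w.support.tail := mem_support_tail_of_closed w hw.ne_nil hy
  have hy' : y ∈ (w.rotate x hx).support := by
    rw [(w.rotate x hx).support_eq_cons]
    exact List.mem_cons_of_mem _ (((w.support_rotate x hx).mem_iff).mpr hyt)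
  obtain ⟨ht, hd⟩ := cycle_split hc hy' hxy.symm
  have hsup := toSubgraph_take_drop_le (w.rotate x hx) hy'
  have hedges : e ∈ ((w.rotate x hx).takeUntil y hy').edges ∨
      e ∈ ((w.rotate x hx).dropUntil y hy').edges := by
    have heq : ((w.rotate x hx).takeUntil y hy').edges ++ ((w.rotate x hx).dropUntil y hy').edges
        = (w.rotate x hx).edges := by
      rw [← Walk.edges_append, (w.rotate x hx).take_spec hy']
    rw [← heq] at hce
    exact List.mem_append.mp hce
  rcases hedges with h | h
  · exact ⟨_, ht, hsub ▸ hsup.1, h⟩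
  · refine ⟨((w.rotate x hx).dropUntil y hy').reverse, hd.reverse, ?_, ?_⟩
    · rw [Walk.toSubgraph_reverse]; exact hsub ▸ hsup.2
    · rwa [Walk.edges_reverse, List.mem_reverse]

end EarProofAux

section EarProofAux2

variable {G : SimpleGraph V} [DecidableEq V]

open SimpleGraph Walk

private lemma ear_ne {F Q : G.Subgraph} {a b : V} (hQ : IsEarWith F Q a b) : a ≠ b := by
  obtain ⟨_, _, p, hp, hlen, _⟩ := hQ
  rintro rfl
  rw [Walk.isPath_iff_eq_nil] at hp
  rw [hp] at hlen
  simp at hlen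

private lemma goodIn_step {F Q : G.Subgraph} {e : Sym2 V} {a b : V}
    (hF : GoodIn F e) (hQ : IsEarWith F Q a b) : GoodIn (F ⊔ Q) e := by
  obtain ⟨ha, hb, p, hp, hlen, hpQ, hint, hedg⟩ := hQ
  have hab : a ≠ b := ear_ne ⟨ha, hb, p, hp, hlen, hpQ, hint, hedg⟩
  have hQverts : ∀ w, w ∈ Q.verts → w ∈ p.support := by
    intro w hw; rw [← hpQ, Walk.mem_verts_toSubgraph] at hw; exact hw
  have hsupF : ∀ w ∈ p.support, w ∈ F.verts → w = a ∨ w = b := by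
    intro w hw hwF
    by_contra h
    push_neg at h
    exact hint w hw h.1 h.2 hwF
  have hFsupp : ∀ {u v' : V} (q : G.Walk u v'), q.toSubgraph ≤ F →
      ∀ w ∈ q.support, w ∈ F.verts := by
    intro u v' q hq w hw
    exact Subgraph.verts_mono hq ((Walk.mem_verts_toSubgraph q).mpr hw)
  -- one endpoint interior, other in F
  have interiorToF : ∀ x y : V, x ∈ p.support → x ∉ F.verts → y ∈ F.verts →
      ∃ r : G.Walk x y, r.IsPath ∧ r.toSubgraph ≤ F ⊔ Q ∧ e ∈ r.edges := by
    intro x y hxp hxF hyF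
    have hxa : x ≠ a := fun h => hxF (h ▸ ha)
    have hxb : x ≠ b := fun h => hxF (h ▸ hb)
    by_cases hya : y = a
    · subst hya
      obtain ⟨q, hq, hqF, hqe⟩ := hF b y hb ha (fun h => hab h.symm)
      refine ⟨(p.dropUntil x hxp).append q, ?_, ?_, ?_⟩
      · apply myPath_append (hp.dropUntil hxp) hq
        intro w hw hwq
        rcases hsupF w (Walk.support_dropUntil_subset p hxp hw) (hFsupp q hqF w hwq) with h | h
        · exact absurd (h ▸ hw) (start_not_mem_drop hp hxp hxa)
        · exact h
      · rw [Walk.toSubgraph_append]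
        exact sup_le (((toSubgraph_take_drop_le p hxp).2.trans_eq hpQ).trans le_sup_right)
          (hqF.trans le_sup_left)
      · rw [Walk.edges_append]; exact List.mem_append_right _ hqe
    · obtain ⟨q, hq, hqF, hqe⟩ := hF a y ha hyF (fun h => hya h.symm)
      refine ⟨((p.takeUntil x hxp).reverse).append q, ?_, ?_, ?_⟩
      · apply myPath_append (hp.takeUntil hxp).reverse hq
        intro w hw hwq
        rw [Walk.support_reverse, List.mem_reverse] at hw
        rcases hsupF w (Walk.support_takeUntil_subset p hxp hw) (hFsupp q hqF w hwq) with h | h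
        · exact h
        · exact absurd (h ▸ hw) (end_not_mem_take hp hxp hxb)
      · rw [Walk.toSubgraph_append, Walk.toSubgraph_reverse]
        exact sup_le (((toSubgraph_take_drop_le p hxp).1.trans_eq hpQ).trans le_sup_right)
          (hqF.trans le_sup_left)
      · rw [Walk.edges_append]; exact List.mem_append_right _ hqe
  -- both endpoints interior
  have interiorBoth : ∀ x y : V, x ∈ p.support → x ∉ F.verts → y ∈ p.support → y ∉ F.verts →
      x ≠ y → ∃ r : G.Walk x y, r.IsPath ∧ r.toSubgraph ≤ F ⊔ Q ∧ e ∈ r.edges := by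
    intro x y hxp hxF hyp hyF hxy
    have hxa : x ≠ a := fun h => hxF (h ▸ ha)
    have hxb : x ≠ b := fun h => hxF (h ▸ hb)
    by_cases hyd : y ∈ (p.dropUntil x hxp).support
    · -- y after x : x → a (rev take), a → b (mid in F), b → y (rev of dropUntil y of drop)
      obtain ⟨mid, hmid, hmidF, hmide⟩ := hF a b ha hb hab
      have hdp : (p.dropUntil x hxp).IsPath := hp.dropUntil hxp
      refine ⟨((p.takeUntil x hxp).reverse).append
        (mid.append ((p.dropUntil x hxp).dropUntil y hyd).reverse), ?_, ?_, ?_⟩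
      · apply glue3 (hp.takeUntil hxp).reverse (hdp.dropUntil hyd) hmid
        · intro w hw hwF
          rw [Walk.support_reverse, List.mem_reverse] at hw
          rcases hsupF w (Walk.support_takeUntil_subset p hxp hw) hwF with h | h
          · exact h
          · exact absurd (h ▸ hw) (end_not_mem_take hp hxp hxb)
        · intro w hw hwF
          have hw' := Walk.support_dropUntil_subset _ hyd hw
          rcases hsupF w (Walk.support_dropUntil_subset p hxp hw') hwF with h | h
          · exact absurd (h ▸ hw') (start_not_mem_drop hp hxp hxa)
          · exact h
        · exact fun w hw => hFsupp mid hmidF w hw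
        · intro w hw hw2
          rw [Walk.support_reverse, List.mem_reverse] at hw
          have hw2' := Walk.support_dropUntil_subset _ hyd hw2
          have : w = x := take_drop_inter hp hxp w hw hw2'
          subst this
          exact start_not_mem_drop hdp hyd (Ne.symm hxy) hw2
      · rw [Walk.toSubgraph_append, Walk.toSubgraph_append, Walk.toSubgraph_reverse,
          Walk.toSubgraph_reverse]
        refine sup_le ?_ (sup_le (hmidF.trans le_sup_left) ?_)
        · exact ((toSubgraph_take_drop_le p hxp).1.trans_eq hpQ).trans le_sup_right
        · exact (((toSubgraph_take_drop_le _ hyd).2.trans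
            (toSubgraph_take_drop_le p hxp).2).trans_eq hpQ).trans le_sup_right
      · rw [Walk.edges_append, Walk.edges_append]
        exact List.mem_append_right _ (List.mem_append_left _ hmide)
    · -- y before x : x → b (drop), b → a (mid in F), a → y (rev of takeUntil y of take)
      have hyt : y ∈ (p.takeUntil x hxp).support := by
        have h1 := supp_split p hxp
        rcases List.mem_append.mp (h1 ▸ hyp) with h | h
        · exact h
        · exact absurd (List.mem_of_mem_tail h) hyd
      obtain ⟨mid, hmid, hmidF, hmide⟩ := hF b a hb ha (Ne.symm hab)
      have htp : (p.takeUntil x hxp).IsPath := hp.takeUntil hxp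
      refine ⟨(p.dropUntil x hxp).append
        (mid.append (((p.takeUntil x hxp).takeUntil y hyt).reverse).reverse), ?_, ?_, ?_⟩
      · apply glue3 (hp.dropUntil hxp) (htp.takeUntil hyt).reverse hmid
        · intro w hw hwF
          rcases hsupF w (Walk.support_dropUntil_subset p hxp hw) hwF with h | h
          · exact absurd (h ▸ hw) (start_not_mem_drop hp hxp hxa)
          · exact h
        · intro w hw hwF
          rw [Walk.support_reverse, List.mem_reverse] at hw
          have hw' := Walk.support_takeUntil_subset _ hyt hw
          rcases hsupF w (Walk.support_takeUntil_subset p hxp hw') hwF with h | h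
          · exact h
          · exact absurd (h ▸ hw') (end_not_mem_take hp hxp hxb)
        · exact fun w hw => hFsupp mid hmidF w hw
        · intro w hw hw2
          rw [Walk.support_reverse, List.mem_reverse] at hw2
          have hw2' := Walk.support_takeUntil_subset _ hyt hw2
          have : w = x := take_drop_inter hp hxp w hw2' hw
          subst this
          exact end_not_mem_take htp hyt (Ne.symm hxy) hw2
      · rw [Walk.toSubgraph_append, Walk.toSubgraph_append, Walk.toSubgraph_reverse,
          Walk.toSubgraph_reverse]
        refine sup_le ?_ (sup_le (hmidF.trans le_sup_left) ?_)
        · exact ((toSubgraph_take_drop_le p hxp).2.trans_eq hpQ).trans le_sup_right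
        · exact (((toSubgraph_take_drop_le _ hyt).1.trans
            (toSubgraph_take_drop_le p hxp).1).trans_eq hpQ).trans le_sup_right
      · rw [Walk.edges_append, Walk.edges_append]
        exact List.mem_append_right _ (List.mem_append_left _ hmide)
  -- main case split
  intro x y hx hy hxy
  rw [Subgraph.verts_sup] at hx hy
  by_cases hxF : x ∈ F.verts <;> by_cases hyF : y ∈ F.verts
  · obtain ⟨q, h1, h2, h3⟩ := hF x y hxF hyF hxy
    exact ⟨q, h1, h2.trans le_sup_left, h3⟩
  · have hyp : y ∈ p.support := hQverts y (hy.resolve_left hyF)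
    obtain ⟨r, h1, h2, h3⟩ := interiorToF y x hyp hyF hxF
    exact ⟨r.reverse, h1.reverse, by rwa [Walk.toSubgraph_reverse],
      by rwa [Walk.edges_reverse, List.mem_reverse]⟩
  · have hxp : x ∈ p.support := hQverts x (hx.resolve_left hxF)
    exact interiorToF x y hxp hxF hyF
  · exact interiorBoth x y (hQverts x (hx.resolve_left hxF)) hxF
      (hQverts y (hy.resolve_left hyF)) hyF hxy

private lemma ear_cycle {F Q : G.Subgraph} {e : Sym2 V} {a b : V}
    (hF : GoodIn F e) (hQ : IsEarWith F Q a b) :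
    ∃ C : G.Subgraph, IsCycleSub G C ∧ e ∈ C.edgeSet ∧ C ≤ F ⊔ Q ∧
      ∃ f, f ∈ C.edgeSet ∧ f ∉ F.edgeSet := by
  have hab : a ≠ b := ear_ne hQ
  obtain ⟨ha, hb, p, hp, hlen, hpQ, hint, hedg⟩ := hQ
  have hsupF : ∀ w ∈ p.support, w ∈ F.verts → w = a ∨ w = b := by
    intro w hw hwF
    by_contra h
    push_neg at h
    exact hint w hw h.1 h.2 hwF
  obtain ⟨q, hq, hqF, hqe⟩ := hF b a hb ha (Ne.symm hab)
  have hqedges : ∀ f ∈ q.edges, f ∈ F.edgeSet := fun f hf =>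
    (Subgraph.edgeSet_mono hqF) ((q.mem_edges_toSubgraph).mpr hf)
  have hqsupp : ∀ w ∈ q.support, w ∈ F.verts := fun w hw =>
    Subgraph.verts_mono hqF ((Walk.mem_verts_toSubgraph q).mpr hw)
  have hcyc : (p.append q).IsCycle := by
    refine ⟨⟨⟨?_⟩, ?_⟩, ?_⟩
    · rw [Walk.edges_append]
      exact List.Nodup.append hp.isTrail.edges_nodup hq.isTrail.edges_nodup
        (fun f hf hf' => hedg f hf (hqedges f hf'))
    · intro h
      have := congrArg Walk.length h
      rw [Walk.length_append] at this
      simp only [Walk.length_nil] at this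
      omega
    · have heq : (p.append q).support.tail = p.support.tail ++ q.support.tail := by
        rw [Walk.support_append, p.support_eq_cons, List.cons_append, List.tail_cons]
        rfl
      rw [heq]
      refine List.Nodup.append (hp.support_nodup.sublist (List.tail_sublist _))
        (hq.support_nodup.sublist (List.tail_sublist _)) ?_
      intro w hw hw'
      rcases hsupF w (List.mem_of_mem_tail hw) (hqsupp w (List.mem_of_mem_tail hw')) with h | h
      · subst h
        have := hp.support_nodup
        rw [p.support_eq_cons] at this
        exact (List.nodup_cons.mp this).1 hw
      · subst h
        have := hq.support_nodup
        rw [q.support_eq_cons] at this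
        exact (List.nodup_cons.mp this).1 hw'
  have hedne : p.edges ≠ [] := by
    intro h
    have := congrArg List.length h
    rw [Walk.length_edges] at this
    simp only [List.length_nil] at this
    omega
  obtain ⟨f, hf⟩ := List.exists_mem_of_ne_nil _ hedne
  refine ⟨(p.append q).toSubgraph, ⟨a, p.append q, hcyc, rfl⟩, ?_, ?_, f, ?_, hedg f hf⟩
  · rw [Walk.mem_edges_toSubgraph, Walk.edges_append]
    exact List.mem_append_right _ hqe
  · rw [Walk.toSubgraph_append]
    exact sup_le (hpQ ▸ le_sup_right) (hqF.trans le_sup_left)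
  · rw [Walk.mem_edges_toSubgraph, Walk.edges_append]
    exact List.mem_append_left _ hf

end EarProofAux2

/-- A 2-connected `k`-cactus with ear decomposition `[Q 0, …, Q l]` satisfies
`l ≤ k - 1`. -/
theorem earDecomp_length_le [Fintype V] (G : SimpleGraph V) (k l : ℕ) (hk : 1 ≤ k)
    (h2 : TwoConnected G) (hc : IsKCactus G k)
    (Q : Fin (l + 1) → G.Subgraph) (hQ : IsEarDecomp G l Q) :
    l ≤ k - 1 := by
  classical
  obtain ⟨hQ0, hear, _hdisj, _hsup⟩ := hQ
  obtain ⟨v, w, hw, hwQ⟩ := hQ0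
  obtain ⟨e, he⟩ : ∃ e, e ∈ w.edges := by
    cases w with
    | nil => exact absurd rfl hw.ne_nil
    | cons h q => exact ⟨_, by rw [Walk.edges_cons]; exact List.mem_cons_self⟩
  set F : ℕ → G.Subgraph := fun n => ⨆ j : Fin (l + 1), ⨆ _ : (j : ℕ) < n, Q j with hFdef
  have hFle : ∀ m n : ℕ, m ≤ n → F m ≤ F n := by
    intro m n hmn
    apply iSup₂_le
    intro j hj
    exact le_iSup₂ (κ := fun j : Fin (l + 1) => (j : ℕ) < n) (f := fun j _ => Q j) j
      (lt_of_lt_of_le hj hmn)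
  have hFfin : ∀ i : Fin (l + 1), (⨆ j : Fin (l + 1), ⨆ _ : j < i, Q j) = F (i : ℕ) := by
    intro i
    apply le_antisymm
    · apply iSup₂_le
      intro j hj
      exact le_iSup₂ (κ := fun j : Fin (l + 1) => (j : ℕ) < (i : ℕ)) (f := fun j _ => Q j) j hj
    · apply iSup₂_le
      intro j hj
      exact le_iSup₂ (κ := fun j : Fin (l + 1) => j < i) (f := fun j _ => Q j) j hj
  have hFsucc : ∀ (n : ℕ) (hn : n < l + 1), F (n + 1) = F n ⊔ Q ⟨n, hn⟩ := by
    intro n hn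
    apply le_antisymm
    · apply iSup₂_le
      intro j hj
      rcases Nat.lt_succ_iff_lt_or_eq.mp hj with h | h
      · exact le_trans
          (le_iSup₂ (κ := fun j : Fin (l + 1) => (j : ℕ) < n) (f := fun j _ => Q j) j h)
          (le_sup_left : F n ≤ F n ⊔ Q ⟨n, hn⟩)
      · have : j = ⟨n, hn⟩ := Fin.ext h
        rw [this]; exact le_sup_right
    · exact sup_le (hFle n (n + 1) (Nat.le_succ n))
        (le_iSup₂ (κ := fun j : Fin (l + 1) => (j : ℕ) < n + 1) (f := fun j _ => Q j)
          ⟨n, hn⟩ (Nat.lt_succ_self n))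
  have hF1 : F 1 = Q 0 := by
    apply le_antisymm
    · apply iSup₂_le
      intro j hj
      have : j = 0 := Fin.ext (by simp only [Fin.val_zero]; omega)
      rw [this]
    · exact le_iSup₂ (κ := fun j : Fin (l + 1) => (j : ℕ) < 1) (f := fun j _ => Q j) 0 (by simp)
  have heQ0 : e ∈ (Q 0).edgeSet := by
    rw [← hwQ]; exact (w.mem_edges_toSubgraph).mpr he
  have key : ∀ n : ℕ, n ≤ l → GoodIn (F (n + 1)) e ∧
      ∃ S : Finset G.Subgraph, S.card = n + 1 ∧
        ∀ C ∈ S, (IsCycleSub G C ∧ e ∈ C.edgeSet) ∧ C ≤ F (n + 1) := by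
    intro n
    induction n with
    | zero =>
      intro _
      refine ⟨by rw [hF1, ← hwQ]; exact goodIn_of_cycle hw he, {Q 0}, by simp, ?_⟩
      intro C hC
      rw [Finset.mem_singleton] at hC
      subst hC
      exact ⟨⟨⟨v, w, hw, hwQ⟩, heQ0⟩, hF1.ge⟩
    | succ n ih =>
      intro hn1
      obtain ⟨hGood, S, hScard, hS⟩ := ih (Nat.le_of_succ_le hn1)
      have hlt : n + 1 < l + 1 := by omega
      have hEar := hear ⟨n + 1, hlt⟩ (by simp)
      rw [hFfin ⟨n + 1, hlt⟩] at hEar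
      obtain ⟨a, b, hab⟩ := hEar
      obtain ⟨C, hCcyc, hCe, hCle, f, hfC, hfF⟩ := ear_cycle hGood hab
      have hstep : F (n + 2) = F (n + 1) ⊔ Q ⟨n + 1, hlt⟩ := hFsucc (n + 1) hlt
      refine ⟨by rw [hstep]; exact goodIn_step hGood hab, insert C S, ?_, ?_⟩
      · rw [Finset.card_insert_of_notMem, hScard]
        intro hCS
        exact hfF (Subgraph.edgeSet_mono (hS C hCS).2 hfC)
      · intro C' hC'
        rcases Finset.mem_insert.mp hC' with h | h
        · subst h; exact ⟨⟨hCcyc, hCe⟩, by rw [hstep]; exact hCle⟩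
        · obtain ⟨h1, h2⟩ := hS C' h
          exact ⟨h1, h2.trans (hFle _ _ (Nat.le_succ _))⟩
  obtain ⟨_, S, hScard, hS⟩ := key l le_rfl
  have hsubset : (S : Set G.Subgraph) ⊆ CyclesThrough G e := fun C hC =>
    ⟨(hS C hC).1.1, (hS C hC).1.2⟩
  haveI : Finite G.Subgraph := by
    apply Finite.of_injective (fun H : G.Subgraph => (H.verts, H.Adj))
    intro H1 H2 h
    rw [Prod.mk.injEq] at h
    exact SimpleGraph.Subgraph.ext h.1 h.2
  have hle := Set.ncard_le_ncard hsubset (Set.toFinite _)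
  rw [Set.ncard_coe_finset, hScard] at hle
  have heG : e ∈ G.edgeSet := (Q 0).edgeSet_subset heQ0
  have hk2 := hc.2 e heG
  omega
end
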